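/- arXiv:2308.11950 — 3 statements merged into one kernel-verified Lean document; each statement's English description precedes it below -/
import Mathlib

section
/- Let C be a finite nonempty set of colors and k = 2⌈log₂|C|⌉. Then there exists a function dir: {0,1}^{k+1} → C × C such that the following holds. For every finite rooted tree S with leaf set Z (|Z| ≥ 2), every linear order ≼ on Z consistent with S, and every coloring φ of the non-root nodes of S with colors from C, there exist linear orders ≼_1,…,≼_k on Z such that for all distinct x,y ∈ Z: dir([x ≼ y],[x ≼_1 y],…,[x ≼_k y]) = (φ(v), φ(w)), where v and w are the children of the lowest common ancestor of x and y in S such that v is an ancestor-or-equal of x and w is an ancestor-or-equal of y. -/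
/-! ### Poset dimension and Boolean dimension -/

/-- The (Dushnik–Miller) dimension of a poset: the least `d` such that the order
is the intersection of `d` linear orders on `X`. -/
noncomputable def posetDim (X : Type*) [PartialOrder X] : ℕ :=
  sInf {d : ℕ | ∃ L : Fin d → X → X → Prop,
    (∀ i, IsLinearOrder X (L i)) ∧ ∀ x y : X, x ≤ y ↔ ∀ i, L i x y}

/-- `(X,≤)` has a Boolean realizer of size `b`: linear orders `L 0, …, L (b-1)` and a
decoder `f` such that for distinct `x y`, `x ≤ y` iff `f` of the vector of truth values
`L i x y` holds.  Boolean dimension at most `b` is equivalent to this. -/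
def hasBoolRealizer (X : Type*) [PartialOrder X] (b : ℕ) : Prop :=
  ∃ (L : Fin b → X → X → Prop) (f : (Fin b → Prop) → Prop),
    (∀ i, IsLinearOrder X (L i)) ∧
    ∀ x y : X, x ≠ y → (x ≤ y ↔ f (fun i => L i x y))

/-! ### Standard examples -/

/-- The order of the standard example `S_k`: elements `a_i = inl i`, `b_j = inr j`,
with `a_i < b_j` iff `i ≠ j` and no other strict comparabilities. -/
def stdLE (k : ℕ) : Fin k ⊕ Fin k → Fin k ⊕ Fin k → Prop
  | Sum.inl i, Sum.inl j => i = j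
  | Sum.inr i, Sum.inr j => i = j
  | Sum.inl i, Sum.inr j => i ≠ j
  | Sum.inr _, Sum.inl _ => False

/-- `X` contains the standard example `S_k` as a subposet. -/
def ContainsStd (X : Type*) [PartialOrder X] (k : ℕ) : Prop :=
  ∃ φ : Fin k ⊕ Fin k → X, Function.Injective φ ∧
    ∀ p q, stdLE k p q ↔ φ p ≤ φ q

/-! ### Kelly examples -/

/-- Index type for the elements of the Kelly example `𝒦_k`:
`inl (inl j)` is `a_{j+2}`, `inl (inr j)` is `b_{j+2}`,
`inr (inl i)` is `c_{i+1}`, `inr (inr i)` is `d_{i+1}`. -/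
abbrev KellyIdx (k : ℕ) := (Fin (k - 2) ⊕ Fin (k - 2)) ⊕ (Fin (k - 1) ⊕ Fin (k - 1))

/-- Generating strict relations of the Kelly example `𝒦_k` (in actual indices:
`a_2,…,a_i < c_i`; `c_i < b_{i+1},…,b_{k-1}`; `a_{i+1},…,a_{k-1} < d_i`;
`d_i < b_2,…,b_i`; the chains `c_1 < ⋯ < c_{k-1}` and `d_1 > ⋯ > d_{k-1}`). -/
def kellyGen (k : ℕ) : KellyIdx k → KellyIdx k → Prop
  | Sum.inl (Sum.inl j), Sum.inr (Sum.inl i) => (j : ℕ) + 1 ≤ (i : ℕ)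
  | Sum.inr (Sum.inl i), Sum.inl (Sum.inr j) => (i : ℕ) ≤ (j : ℕ)
  | Sum.inl (Sum.inl j), Sum.inr (Sum.inr i) => (i : ℕ) ≤ (j : ℕ)
  | Sum.inr (Sum.inr i), Sum.inl (Sum.inr j) => (j : ℕ) + 1 ≤ (i : ℕ)
  | Sum.inr (Sum.inl i), Sum.inr (Sum.inl i') => (i : ℕ) < (i' : ℕ)
  | Sum.inr (Sum.inr i), Sum.inr (Sum.inr i') => (i' : ℕ) < (i : ℕ)
  | _, _ => False

/-- The order of the Kelly example `𝒦_k`: the reflexive-transitive closure of the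
generating relations. -/
def kellyLE (k : ℕ) : KellyIdx k → KellyIdx k → Prop :=
  Relation.ReflTransGen (kellyGen k)

/-- `X` contains the Kelly example `𝒦_k` as a subposet. -/
def ContainsKelly (X : Type*) [PartialOrder X] (k : ℕ) : Prop :=
  ∃ φ : KellyIdx k → X, Function.Injective φ ∧
    ∀ p q, kellyLE k p q ↔ φ p ≤ φ q

/-! ### Cover graphs, minors, tree decompositions -/

/-- `y` covers `x` with respect to the relation `r`. -/
def coverAdjOf {V : Type*} (r : V → V → Prop) (x y : V) : Prop :=
  x ≠ y ∧ r x y ∧ ∀ z, r x z → r z y → z = x ∨ z = y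

/-- The cover graph of the relation `r` (for a partial order `r`, vertices are joined
iff one covers the other). -/
def coverGraphOf {V : Type*} (r : V → V → Prop) : SimpleGraph V where
  Adj x y := coverAdjOf r x y ∨ coverAdjOf r y x
  symm := ⟨fun _ _ h => Or.symm h⟩
  loopless := ⟨fun _ h => by rcases h with h | h <;> exact h.1 rfl⟩

/-- `H` is a minor of `G`: there is a model of `H` in `G`, i.e. pairwise disjoint
branch sets inducing connected subgraphs, joined by edges of `G` for each edge of `H`. -/
def GraphIsMinor {V W : Type*} (H : SimpleGraph V) (G : SimpleGraph W) : Prop :=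
  ∃ M : V → Set W,
    (∀ x, (G.induce (M x)).Connected) ∧
    (∀ x y, x ≠ y → Disjoint (M x) (M y)) ∧
    (∀ x y, H.Adj x y → ∃ a ∈ M x, ∃ b ∈ M y, G.Adj a b)

/-- A tree decomposition of the graph `G` with nodes `ν`. -/
structure TreeDecomp {V : Type*} (G : SimpleGraph V) (ν : Type*) where
  tree : SimpleGraph ν
  isTree : tree.IsTree
  bag : ν → Set V
  bag_connected : ∀ v : V, (tree.induce {u | v ∈ bag u}).Connected
  bag_edge : ∀ x y : V, G.Adj x y → ∃ u, x ∈ bag u ∧ y ∈ bag u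

/-- `G` has treewidth at most `w`: it has a tree decomposition all of whose bags
have at most `w + 1` elements. -/
def treewidthLE {V : Type*} (G : SimpleGraph V) (w : ℕ) : Prop :=
  ∃ (ν : Type) (td : TreeDecomp G ν), ∀ u, (td.bag u).ncard ≤ w + 1

/-! ### Binary trees via positions -/

/-- A binary tree with leaves labelled by `X`. -/
inductive BTree (X : Type*) where
  | leaf (x : X)
  | node (l r : BTree X)

namespace BTree

/-- The subtree of `t` at position `p` (`false` = go left, `true` = go right). -/
def subtreeAt {X : Type*} : BTree X → List Bool → Option (BTree X)
  | t, [] => some t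
  | leaf _, _ :: _ => none
  | node l r, b :: p => subtreeAt (if b then r else l) p

/-- `p` is a valid position (node) of `t`. -/
def IsPos {X : Type*} (t : BTree X) (p : List Bool) : Prop :=
  (t.subtreeAt p).isSome

/-- `p` is an inner node of `t` (neither the root nor a leaf). -/
def IsInner {X : Type*} (t : BTree X) (p : List Bool) : Prop :=
  p ≠ [] ∧ ∃ l r : BTree X, t.subtreeAt p = some (node l r)

/-- The multiset of leaf labels of `t`. -/
def leaves {X : Type*} : BTree X → Multiset X
  | leaf x => {x}
  | node l r => leaves l + leaves r

end BTree

/-- Longest common prefix of two positions: the position of the lowest common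
ancestor of the two nodes. -/
def lcp : List Bool → List Bool → List Bool
  | a :: as, b :: bs => if a = b then a :: lcp as bs else []
  | _, _ => []

/-! ### NLC-decompositions -/

/-- An NLC-decomposition of the finite poset `(X, ≤)` with label set `Q`:
a binary tree with leaf set exactly `X`, initial labels `init`, relabelings
`rel u v : Q → Q` for `u` a strict ancestor of `v` satisfying the composition law,
and status relations `R`, `R'` encoding the order at lowest common ancestors. -/
structure NLCDecomp (X : Type*) [PartialOrder X] [Fintype X] (Q : Type*) where
  tree : BTree X
  pos : X → List Bool
  pos_spec : ∀ x, tree.subtreeAt (pos x) = some (BTree.leaf x)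
  leaves_eq : tree.leaves = (Finset.univ : Finset X).val
  init : X → Q
  rel : List Bool → List Bool → Q → Q
  rel_comp : ∀ u v w : List Bool, tree.IsPos w →
    u <+: v → u ≠ v → v <+: w → v ≠ w →
    ∀ γ : Q, rel u v (rel v w γ) = rel u w γ
  R : List Bool → Set (Q × Q)
  R' : List Bool → Set (Q × Q)
  encode : ∀ x y : X, x ≠ y →
    (lcp (pos x) (pos y) ++ [false]) <+: pos x →
    (lcp (pos x) (pos y) ++ [true]) <+: pos y →
    ((x ≤ y ↔ (rel (lcp (pos x) (pos y)) (pos x) (init x),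
               rel (lcp (pos x) (pos y)) (pos y) (init y)) ∈ R (lcp (pos x) (pos y))) ∧
     (y ≤ x ↔ (rel (lcp (pos x) (pos y)) (pos y) (init y),
               rel (lcp (pos x) (pos y)) (pos x) (init x)) ∈ R' (lcp (pos x) (pos y))))

namespace NLCDecomp

variable {X Q : Type*} [PartialOrder X] [Fintype X]

/-- The label `ℓ(u,x)` of the leaf `x` at its ancestor `u`. -/
def lab (D : NLCDecomp X Q) (u : List Bool) (x : X) : Q :=
  if u = D.pos x then D.init x else D.rel u (D.pos x) (D.init x)

/-- The set `L≤(x,v)` of labels `γ` such that `x ≤ γ` at `v`, for `x ∉ X(v)`. -/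
def Lle (D : NLCDecomp X Q) (x : X) (v : List Bool) : Set Q :=
  { γ | ((lcp (D.pos x) v ++ [false]) <+: D.pos x ∧
          (D.lab (lcp (D.pos x) v) x, D.rel (lcp (D.pos x) v) v γ) ∈ D.R (lcp (D.pos x) v)) ∨
        (¬ (lcp (D.pos x) v ++ [false]) <+: D.pos x ∧
          (D.rel (lcp (D.pos x) v) v γ, D.lab (lcp (D.pos x) v) x) ∈ D.R' (lcp (D.pos x) v)) }

/-- The set `L≥(x,v)` of labels `γ` such that `x ≥ γ` at `v`, for `x ∉ X(v)`. -/
def Lge (D : NLCDecomp X Q) (x : X) (v : List Bool) : Set Q :=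
  { γ | ((lcp (D.pos x) v ++ [false]) <+: D.pos x ∧
          (D.lab (lcp (D.pos x) v) x, D.rel (lcp (D.pos x) v) v γ) ∈ D.R' (lcp (D.pos x) v)) ∨
        (¬ (lcp (D.pos x) v ++ [false]) <+: D.pos x ∧
          (D.rel (lcp (D.pos x) v) v γ, D.lab (lcp (D.pos x) v) x) ∈ D.R (lcp (D.pos x) v)) }

end NLCDecomp

/-- `X` has NLC-width at most `q`. -/
def nlcWidthLE (X : Type*) [PartialOrder X] [Fintype X] (q : ℕ) : Prop :=
  ∃ m : ℕ, m ≤ q ∧ Nonempty (NLCDecomp X (Fin m))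

/-! ### Splits, h-neighbors, h-chains, h-crosses -/

/-- `u` and `v` are `h`-neighbors with respect to the split `s`. -/
def HNbr {X Q : Type*} [PartialOrder X] [Fintype X] (D : NLCDecomp X Q)
    (s : List Bool → ℕ) (h : ℕ) (u v : List Bool) : Prop :=
  D.tree.IsInner u ∧ D.tree.IsInner v ∧ u <+: v ∧ u ≠ v ∧ s u = h ∧ s v = h ∧
    ∀ w, u <+: w → w <+: v → w ≠ u → w ≠ v → s w ≤ h

/-- `s` is a decent split of order `p`: it maps inner nodes into `[p]` and is
forward Ramseyan with respect to the relabeling assignment of `D`. -/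
def DecentSplit {X Q : Type*} [PartialOrder X] [Fintype X] (D : NLCDecomp X Q)
    (s : List Bool → ℕ) (p : ℕ) : Prop :=
  (∀ u, D.tree.IsInner u → 1 ≤ s u ∧ s u ≤ p) ∧
  (∀ h u v u' v', HNbr D s h u v → HNbr D s h u' v' →
    ∀ γ : Q, D.rel u v (D.rel u' v' γ) = D.rel u v γ)

/-- The set `E_h` of relabelings between `h`-neighbors. -/
def Eh {X Q : Type*} [PartialOrder X] [Fintype X] (D : NLCDecomp X Q)
    (s : List Bool → ℕ) (h : ℕ) : Set (Q → Q) :=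
  { σ | ∃ u v, HNbr D s h u v ∧ σ = D.rel u v }

/-- `A` is an `E_h`-class (an equivalence class of `α ≡_h β ⇔ ∀ σ ∈ E_h, σ α = σ β`). -/
def IsEhClass {X Q : Type*} [PartialOrder X] [Fintype X] (D : NLCDecomp X Q)
    (s : List Bool → ℕ) (h : ℕ) (A : Set Q) : Prop :=
  ∃ α : Q, A = { β : Q | ∀ σ ∈ Eh D s h, σ β = σ α }

/-- `c 0, c 1, …, c ℓ` is an `h`-chain of length `ℓ`: mutual `h`-neighbors,
each a strict ancestor of the next. -/
def IsHChain {X Q : Type*} [PartialOrder X] [Fintype X] (D : NLCDecomp X Q)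
    (s : List Bool → ℕ) (h ℓ : ℕ) (c : ℕ → List Bool) : Prop :=
  ∀ i j : ℕ, i < j → j ≤ ℓ → HNbr D s h (c i) (c j)

/-- There exists an `h`-cross. -/
def HCross {X Q : Type*} [PartialOrder X] [Fintype X] (D : NLCDecomp X Q)
    (s : List Bool → ℕ) (h : ℕ) : Prop :=
  ∃ (u v : List Bool) (x y : X) (σ : Q → Q),
    HNbr D s h u v ∧
    u <+: D.pos x ∧ ¬ v <+: D.pos x ∧
    u <+: D.pos y ∧ ¬ v <+: D.pos y ∧
    ¬ x ≤ y ∧ ¬ y ≤ x ∧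
    σ ∈ Eh D s h ∧
    σ (D.lab u x) ∈ D.Lge y v ∧ σ (D.lab u y) ∈ D.Lle x v

/-! ### Rooted trees (general), consistent orders, semigroup labelings -/

/-- A rooted tree on the node set `ν`, given by its parent function. -/
structure ParentTree (ν : Type*) where
  root : ν
  parent : ν → ν
  parent_root : parent root = root
  reach : ∀ v, ∃ n : ℕ, parent^[n] v = root

namespace ParentTree

/-- `u` is an ancestor of `v` (allowing `u = v`). -/
def Anc {ν : Type*} (T : ParentTree ν) (u v : ν) : Prop :=
  ∃ n : ℕ, T.parent^[n] v = u

/-- `v` is a leaf of `T`. -/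
def IsLeaf {ν : Type*} (T : ParentTree ν) (v : ν) : Prop :=
  ∀ w, T.parent w = v → w = v

/-- `u` is the lowest common ancestor of `x` and `y`. -/
def IsLCA {ν : Type*} (T : ParentTree ν) (u x y : ν) : Prop :=
  T.Anc u x ∧ T.Anc u y ∧ ∀ w, T.Anc w x → T.Anc w y → T.Anc w u

end ParentTree

/-- The linear order `r` on the leaf set (through `ι : Z → ν`) is consistent with the
tree `T`: the leaves below any node form a contiguous interval of `r`. -/
def ConsistentOrder {ν Z : Type*} (T : ParentTree ν) (ι : Z → ν) (r : Z → Z → Prop) : Prop :=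
  IsLinearOrder Z r ∧ ∀ u : ν, ∀ a b c : Z, r a b → r b c →
    T.Anc u (ι a) → T.Anc u (ι c) → T.Anc u (ι b)

/-- `lam` is a `(Λ,·)`-labeling of the rooted tree `T`. -/
def SGLabeling {ν Λ : Type*} [Mul Λ] (T : ParentTree ν) (lam : ν → ν → Λ) : Prop :=
  ∀ u v w, T.Anc u v → u ≠ v → T.Anc v w → v ≠ w → lam u v * lam v w = lam u w

/-! ### Rooted (binary) tree decompositions -/

/-- A tree decomposition of `G` over a binary tree whose leaf set is exactly the
vertex set of `G`; nodes are positions, bags are attached to positions, and the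
connectivity condition is expressed via paths in the tree. -/
structure BTreeDecomp (X : Type*) [Fintype X] (G : SimpleGraph X) where
  tree : BTree X
  pos : X → List Bool
  pos_spec : ∀ x, tree.subtreeAt (pos x) = some (BTree.leaf x)
  leaves_eq : tree.leaves = (Finset.univ : Finset X).val
  bag : List Bool → Set X
  bag_nonempty : ∀ x : X, ∃ p, tree.IsPos p ∧ x ∈ bag p
  bag_path : ∀ x : X, ∀ p q r : List Bool, tree.IsPos p → tree.IsPos q →
    x ∈ bag p → x ∈ bag q → lcp p q <+: r → (r <+: p ∨ r <+: q) → x ∈ bag r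
  bag_edge : ∀ x y : X, G.Adj x y → ∃ p, tree.IsPos p ∧ x ∈ bag p ∧ y ∈ bag p

/-! ### Alternating cycles -/

/-- `(x 0, y 0), …, (x (m-1), y (m-1))` is a (strict) alternating cycle:
the pairs are incomparable, `x i ≤ y (i+1 mod m)`, and these are the only
comparabilities among the listed elements. -/
def IsAltCycle {X : Type*} [PartialOrder X] (m : ℕ) (x y : ℕ → X) : Prop :=
  2 ≤ m ∧
  (∀ i < m, ¬ x i ≤ y i ∧ ¬ y i ≤ x i) ∧
  (∀ i < m, x i ≤ y ((i + 1) % m)) ∧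
  (∀ i < m, ∀ j < m, x i ≤ y j → j = (i + 1) % m) ∧
  (∀ i < m, ∀ j < m, x i ≤ x j → x i = x j) ∧
  (∀ i < m, ∀ j < m, y i ≤ y j → y i = y j) ∧
  (∀ i < m, ∀ j < m, y i ≤ x j → y i = x j)

/-! ### STATEMENT 5: color detection in trees via linear orders -/

/-! ### Auxiliary machinery for the proof -/

section CDAux

variable {ν : Type*} {S : ParentTree ν}

lemma cd_anc_refl (v : ν) : S.Anc v v := ⟨0, rfl⟩

lemma cd_anc_of_parent {u v : ν} (h : S.parent v = u) : S.Anc u v :=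
  ⟨1, by simp [h]⟩

lemma cd_anc_trans {u v w : ν} (h1 : S.Anc u v) (h2 : S.Anc v w) : S.Anc u w := by
  obtain ⟨n, hn⟩ := h1; obtain ⟨m, hm⟩ := h2
  exact ⟨n + m, by rw [Function.iterate_add_apply, hm, hn]⟩

lemma cd_iterate_root (n : ℕ) : S.parent^[n] S.root = S.root := by
  induction n with
  | zero => rfl
  | succ k ih => rw [Function.iterate_succ_apply', ih, S.parent_root]

lemma cd_anc_root (v : ν) : S.Anc S.root v := S.reach v

lemma cd_anc_antisymm {u v : ν} (h1 : S.Anc u v) (h2 : S.Anc v u) : u = v := by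
  obtain ⟨n, hn⟩ := h1; obtain ⟨m, hm⟩ := h2
  rcases Nat.eq_zero_or_pos n with rfl | hpos
  · exact hn.symm
  have hper : S.parent^[n + m] u = u := by
    rw [Function.iterate_add_apply, hm, hn]
  have hiter : ∀ t : ℕ, S.parent^[(n + m) * t] u = u := by
    intro t; induction t with
    | zero => rfl
    | succ k ih => rw [Nat.mul_succ, Function.iterate_add_apply, hper, ih]
  obtain ⟨k, hk⟩ := S.reach u
  have hkle : k ≤ (n + m) * k := Nat.le_mul_of_pos_left k (by omega)
  have hroot : u = S.root := by
    have hN : S.parent^[(n + m) * k] u = u := hiter k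
    have h2' : S.parent^[(n + m) * k] u = S.root := by
      rw [show (n + m) * k = ((n + m) * k - k) + k by omega,
        Function.iterate_add_apply, hk, cd_iterate_root]
    rw [← hN, h2']
  have hv : v = S.root := by rw [← hm, hroot, cd_iterate_root]
  rw [hroot, hv]

lemma cd_anc_total {a b x : ν} (ha : S.Anc a x) (hb : S.Anc b x) :
    S.Anc a b ∨ S.Anc b a := by
  obtain ⟨n, hn⟩ := ha; obtain ⟨m, hm⟩ := hb
  rcases le_total n m with h | h
  · right
    refine ⟨m - n, ?_⟩
    rw [← hn, ← Function.iterate_add_apply, show m - n + n = m by omega]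
    exact hm
  · left
    refine ⟨n - m, ?_⟩
    rw [← hm, ← Function.iterate_add_apply, show n - m + m = n by omega]
    exact hn

lemma cd_exists_child {u x : ν} (h : S.Anc u x) (hne : u ≠ x) :
    ∃ v, S.parent v = u ∧ v ≠ u ∧ S.Anc v x := by
  classical
  obtain ⟨n, hn⟩ := h
  have hex : ∃ m, S.parent^[m] x = u := ⟨n, hn⟩
  have hspec : S.parent^[Nat.find hex] x = u := Nat.find_spec hex
  have hpos : Nat.find hex ≠ 0 := by
    intro h0; rw [h0] at hspec; exact hne hspec.symm
  obtain ⟨k, hk⟩ : ∃ k, Nat.find hex = k + 1 := ⟨Nat.find hex - 1, by omega⟩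
  rw [hk, Function.iterate_succ_apply'] at hspec
  refine ⟨S.parent^[k] x, hspec, ?_, ⟨k, rfl⟩⟩
  intro hkk
  have := Nat.find_min' hex hkk
  omega

lemma cd_children_eq {u v w p : ν} (hv1 : S.parent v = u) (hv2 : v ≠ u)
    (hw1 : S.parent w = u) (hw2 : w ≠ u) (hvp : S.Anc v p) (hwp : S.Anc w p) :
    v = w := by
  have key : ∀ a b' : ν, S.parent a = u → a ≠ u → S.parent b' = u → S.Anc a b' → a = b' := by
    rintro a b' ha1 ha2 hb1 ⟨t, ht⟩
    cases t with
    | zero => exact ht.symm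
    | succ k =>
      exfalso
      rw [Function.iterate_succ_apply, hb1] at ht
      exact ha2 (cd_anc_antisymm ⟨k, ht⟩ (cd_anc_of_parent ha1))
  rcases cd_anc_total hvp hwp with h | h
  · exact key v w hv1 hv2 hw1 h
  · exact (key w v hw1 hw2 hv1 h).symm

lemma cd_leaf_desc_aux {l : ν} (hl : S.IsLeaf l) :
    ∀ (n : ℕ) (t : ν), S.parent^[n] t = l → t = l := by
  intro n
  induction n with
  | zero => intro t h; exact h
  | succ k ih =>
    intro t h
    rw [Function.iterate_succ_apply] at h
    exact hl t (ih _ h)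

lemma cd_leaf_desc {l t : ν} (hl : S.IsLeaf l) (h : S.Anc l t) : t = l := by
  obtain ⟨n, hn⟩ := h
  exact cd_leaf_desc_aux hl n t hn

noncomputable def cdDepth (S : ParentTree ν) (v : ν) : ℕ :=
  @Nat.find (fun n => S.parent^[n] v = S.root) (Classical.decPred _) (S.reach v)

lemma cdDepth_spec (v : ν) : S.parent^[cdDepth S v] v = S.root :=
  @Nat.find_spec (fun n => S.parent^[n] v = S.root) (Classical.decPred _) (S.reach v)

lemma cdDepth_le {v : ν} {n : ℕ} (h : S.parent^[n] v = S.root) : cdDepth S v ≤ n :=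
  @Nat.find_min' (fun n => S.parent^[n] v = S.root) (Classical.decPred _) (S.reach v) n h

lemma cd_depth_lt {a b : ν} (h : S.Anc a b) (hne : a ≠ b) :
    cdDepth S a < cdDepth S b := by
  obtain ⟨n, hn⟩ := h
  rcases Nat.eq_zero_or_pos n with rfl | hnpos
  · exact absurd hn.symm hne
  by_cases hd : cdDepth S b ≤ n
  · have ha : a = S.root := by
      calc a = S.parent^[n] b := hn.symm
        _ = S.parent^[n - cdDepth S b] (S.parent^[cdDepth S b] b) := by
            rw [← Function.iterate_add_apply]; congr 1; omega
        _ = S.parent^[n - cdDepth S b] S.root := by rw [cdDepth_spec]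
        _ = S.root := cd_iterate_root _
    have h0 : cdDepth S a = 0 := Nat.le_zero.mp (cdDepth_le (by rw [Function.iterate_zero_apply, ha]))
    have hb0 : cdDepth S b ≠ 0 := by
      intro h
      have hbr : b = S.root := by
        have := cdDepth_spec (S := S) b; rwa [h, Function.iterate_zero_apply] at this
      exact hne (by rw [ha, hbr])
    omega
  · push_neg at hd
    have hra : S.parent^[cdDepth S b - n] a = S.root := by
      rw [← hn, ← Function.iterate_add_apply, show cdDepth S b - n + n = cdDepth S b by omega]
      exact cdDepth_spec b
    have := cdDepth_le hra
    omega

lemma cd_exists_lca [Fintype ν] (S : ParentTree ν) (p q : ν) :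
    ∃ u, S.Anc u p ∧ S.Anc u q ∧ ∀ a, S.Anc a p → S.Anc a q → S.Anc a u := by
  classical
  have hne : (Finset.univ.filter (fun w => S.Anc w p ∧ S.Anc w q)).Nonempty :=
    ⟨S.root, by simp [cd_anc_root]⟩
  obtain ⟨u, hu, hmax⟩ := Finset.exists_max_image _ (cdDepth S) hne
  simp only [Finset.mem_filter, Finset.mem_univ, true_and] at hu
  refine ⟨u, hu.1, hu.2, ?_⟩
  intro a hap haq
  rcases cd_anc_total hap hu.1 with h | h
  · exact h
  · by_cases he : u = a
    · exact he ▸ cd_anc_refl u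
    · have h1 := cd_depth_lt h he
      have h2 := hmax a (by simp [hap, haq])
      omega

lemma cd_exists_triple [Fintype ν] {p q : ν} (hlp : S.IsLeaf p) (hlq : S.IsLeaf q)
    (hpq : p ≠ q) :
    ∃ u v w, S.parent v = u ∧ v ≠ u ∧ S.Anc v p ∧
      S.parent w = u ∧ w ≠ u ∧ S.Anc w q ∧ v ≠ w := by
  obtain ⟨u, hup, huq, hmax⟩ := cd_exists_lca S p q
  have hup' : u ≠ p := by
    rintro rfl
    exact hpq (cd_leaf_desc hlp huq).symm
  have huq' : u ≠ q := by
    rintro rfl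
    exact hpq (cd_leaf_desc hlq hup)
  obtain ⟨v, hv1, hv2, hv3⟩ := cd_exists_child hup hup'
  obtain ⟨w, hw1, hw2, hw3⟩ := cd_exists_child huq huq'
  have hvw : v ≠ w := by
    rintro rfl
    exact hv2 (cd_anc_antisymm (hmax v hv3 hw3) (cd_anc_of_parent hv1))
  exact ⟨u, v, w, hv1, hv2, hv3, hw1, hw2, hw3, hvw⟩

lemma cd_triple_unique {p q u v w u' v' w' : ν}
    (hv1 : S.parent v = u) (hv2 : v ≠ u) (hv3 : S.Anc v p)
    (hw1 : S.parent w = u) (hw2 : w ≠ u) (hw3 : S.Anc w q) (hvw : v ≠ w)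
    (hv1' : S.parent v' = u') (hv2' : v' ≠ u') (hv3' : S.Anc v' p)
    (hw1' : S.parent w' = u') (hw2' : w' ≠ u') (hw3' : S.Anc w' q) (hvw' : v' ≠ w') :
    u = u' ∧ v = v' ∧ w = w' := by
  have hmax : ∀ (u₁ v₁ w₁ : ν), S.parent v₁ = u₁ → v₁ ≠ u₁ → S.Anc v₁ p →
      S.parent w₁ = u₁ → w₁ ≠ u₁ → S.Anc w₁ q → v₁ ≠ w₁ →
      ∀ a, S.Anc a p → S.Anc a q → S.Anc a u₁ := by
    intro u₁ v₁ w₁ a1 a2 a3 a4 a5 a6 a7 a hap haq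
    have hu1p : S.Anc u₁ p := cd_anc_trans (cd_anc_of_parent a1) a3
    rcases cd_anc_total hap hu1p with h | h
    · exact h
    · by_cases he : u₁ = a
      · exact he ▸ cd_anc_refl u₁
      · obtain ⟨c0, hc1, hc2, hc3⟩ := cd_exists_child h he
        have hcv : c0 = v₁ := cd_children_eq hc1 hc2 a1 a2 (cd_anc_trans hc3 hap) a3
        have hcw : c0 = w₁ := cd_children_eq hc1 hc2 a4 a5 (cd_anc_trans hc3 haq) a6
        exact absurd (hcv.symm.trans hcw) a7
  have huu' : u = u' := by
    apply cd_anc_antisymm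
    · exact hmax u' v' w' hv1' hv2' hv3' hw1' hw2' hw3' hvw' u
        (cd_anc_trans (cd_anc_of_parent hv1) hv3) (cd_anc_trans (cd_anc_of_parent hw1) hw3)
    · exact hmax u v w hv1 hv2 hv3 hw1 hw2 hw3 hvw u'
        (cd_anc_trans (cd_anc_of_parent hv1') hv3') (cd_anc_trans (cd_anc_of_parent hw1') hw3')
  subst huu'
  exact ⟨rfl, cd_children_eq hv1 hv2 hv1' hv2' hv3 hv3',
    cd_children_eq hw1 hw2 hw1' hw2' hw3 hw3'⟩

end CDAux

/-- Comparison formula for one of the auxiliary linear orders. -/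
def cdG {ν Z : Type*} (r : Z → Z → Prop) (b : ν → Bool) (c : Bool)
    (V W : Z → Z → ν) (x y : Z) : Prop :=
  if b (V x y) = b (W x y) then (if b (V x y) = true then r y x else r x y)
  else b (V x y) = c

def cdBitIdx (m : ℕ) (i : Fin (2 * m)) : Fin m := ⟨i.1 / 2, by have := i.2; omega⟩
def cdIdx0 (m : ℕ) (j : Fin m) : Fin (2 * m) := ⟨2 * j.1, by have := j.2; omega⟩
def cdIdx1 (m : ℕ) (j : Fin m) : Fin (2 * m) := ⟨2 * j.1 + 1, by have := j.2; omega⟩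
def cdCBit (m : ℕ) (i : Fin (2 * m)) : Bool := decide (i.1 % 2 = 1)

lemma cdBitIdx_idx0 (m : ℕ) (j : Fin m) : cdBitIdx m (cdIdx0 m j) = j := by
  apply Fin.ext; simp only [cdBitIdx, cdIdx0]; omega

lemma cdBitIdx_idx1 (m : ℕ) (j : Fin m) : cdBitIdx m (cdIdx1 m j) = j := by
  apply Fin.ext; simp only [cdBitIdx, cdIdx1]; omega

lemma cdCBit_idx0 (m : ℕ) (j : Fin m) : cdCBit m (cdIdx0 m j) = false := by
  show decide ((2 * j.1) % 2 = 1) = false; exact decide_eq_false (by omega)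

lemma cdCBit_idx1 (m : ℕ) (j : Fin m) : cdCBit m (cdIdx1 m j) = true := by
  show decide ((2 * j.1 + 1) % 2 = 1) = true; exact decide_eq_true (by omega)

lemma cd_order_exists {ν Z : Type*} [Fintype ν] (S : ParentTree ν) (ι : Z → ν)
    (hinj : Function.Injective ι)
    (hleaf : ∀ v, S.IsLeaf v ↔ ∃ z, ι z = v)
    (r : Z → Z → Prop) (hr : ConsistentOrder S ι r)
    (b : ν → Bool) (c : Bool) :
    ∃ L : Z → Z → Prop, IsLinearOrder Z L ∧
      ∀ x y : Z, x ≠ y → ∀ u v w : ν,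
        S.parent v = u → v ≠ u → S.Anc v (ι x) →
        S.parent w = u → w ≠ u → S.Anc w (ι y) → v ≠ w →
        (L x y ↔ if b v = b w then (if b v = true then r y x else r x y) else b v = c) := by
  classical
  haveI : IsLinearOrder Z r := hr.1
  have rtot : ∀ a b : Z, r a b ∨ r b a := fun a b => Std.Total.total a b
  have rtrans : ∀ a b c : Z, r a b → r b c → r a c := fun a b c h1 h2 => IsTrans.trans a b c h1 h2
  have ranti : ∀ a b : Z, r a b → r b a → a = b := fun a b h1 h2 => Std.Antisymm.antisymm a b h1 h2
  have hex : ∀ x y : Z, ∃ u v w : ν, x ≠ y →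
      S.parent v = u ∧ v ≠ u ∧ S.Anc v (ι x) ∧
      S.parent w = u ∧ w ≠ u ∧ S.Anc w (ι y) ∧ v ≠ w := by
    intro x y
    by_cases hxy : x = y
    · exact ⟨S.root, S.root, S.root, fun h => absurd hxy h⟩
    · obtain ⟨u, v, w, h1, h2, h3, h4, h5, h6, h7⟩ :=
        cd_exists_triple (S := S) ((hleaf (ι x)).2 ⟨x, rfl⟩) ((hleaf (ι y)).2 ⟨y, rfl⟩)
          (fun h => hxy (hinj h))
      exact ⟨u, v, w, fun _ => ⟨h1, h2, h3, h4, h5, h6, h7⟩⟩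
  choose U V W hUVW using hex
  have hval : ∀ x y, x ≠ y → ∀ u v w : ν,
      S.parent v = u → v ≠ u → S.Anc v (ι x) →
      S.parent w = u → w ≠ u → S.Anc w (ι y) → v ≠ w →
      U x y = u ∧ V x y = v ∧ W x y = w := by
    intro x y hxy u v w h1 h2 h3 h4 h5 h6 h7
    obtain ⟨g1, g2, g3, g4, g5, g6, g7⟩ := hUVW x y hxy
    exact cd_triple_unique g1 g2 g3 g4 g5 g6 g7 h1 h2 h3 h4 h5 h6 h7
  have hswap : ∀ x y (hxy : x ≠ y), V y x = W x y ∧ W y x = V x y := by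
    intro x y hxy
    obtain ⟨g1, g2, g3, g4, g5, g6, g7⟩ := hUVW x y hxy
    obtain ⟨e1, e2, e3⟩ := hval y x hxy.symm (U x y) (W x y) (V x y) g4 g5 g6 g1 g2 g3 (Ne.symm g7)
    exact ⟨e2, e3⟩
  refine ⟨fun x y => x = y ∨ (x ≠ y ∧ cdG r b c V W x y), ?_, ?_⟩
  · refine { refl := fun a => Or.inl rfl, trans := ?_, antisymm := ?_, total := ?_ }
    · -- transitivity
      intro x y z hxy hyz
      rcases hxy with rfl | ⟨hne1, hG1⟩
      · exact hyz
      rcases hyz with rfl | ⟨hne2, hG2⟩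
      · exact Or.inr ⟨hne1, hG1⟩
      by_cases hxz : x = z
      · exact Or.inl hxz
      refine Or.inr ⟨hxz, ?_⟩
      obtain ⟨a1, a2, a3, a4, a5, a6, a7⟩ := hUVW x y hne1
      obtain ⟨b1, b2, b3, b4, b5, b6, b7⟩ := hUVW y z hne2
      simp only [cdG] at hG1 hG2 ⊢
      have hU1y : S.Anc (U x y) (ι y) := cd_anc_trans (cd_anc_of_parent a4) a6
      have hU2y : S.Anc (U y z) (ι y) := cd_anc_trans (cd_anc_of_parent b1) b3
      by_cases hUeq : U x y = U y z
      · -- equal lca case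
        have hw1v2 : W x y = V y z :=
          cd_children_eq a4 a5 (b1.trans hUeq.symm) (fun h => b2 (h.trans hUeq)) a6 b3
        by_cases hvw2 : V x y = W y z
        · -- impossible configuration
          exfalso
          by_cases hb : b (V x y) = b (W x y)
          · rw [if_pos hb] at hG1
            have hb2 : b (V y z) = b (W y z) := by
              rw [← hw1v2, ← hvw2, hb]
            rw [if_pos hb2] at hG2
            have hz : S.Anc (V x y) (ι z) := hvw2 ▸ b6
            cases hbv : b (V x y) with
            | false =>
              rw [if_neg (by simp [hbv])] at hG1
              rw [if_neg (by rw [← hw1v2, ← hb, hbv]; simp)] at hG2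
              have : S.Anc (V x y) (ι y) := hr.2 (V x y) x y z hG1 hG2 a3 hz
              exact a7 (cd_children_eq a1 a2 a4 a5 this a6)
            | true =>
              rw [if_pos (by rw [hbv])] at hG1
              rw [if_pos (by rw [← hw1v2, ← hb, hbv])] at hG2
              have : S.Anc (V x y) (ι y) := hr.2 (V x y) z y x hG2 hG1 hz a3
              exact a7 (cd_children_eq a1 a2 a4 a5 this a6)
          · rw [if_neg hb] at hG1
            have hb2 : ¬ b (V y z) = b (W y z) := by
              rw [← hw1v2, ← hvw2]
              exact fun h => hb h.symm
            rw [if_neg hb2] at hG2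
            rw [← hw1v2] at hG2
            exact hb (hG1.trans hG2.symm)
        · -- triple for (x,z) is (U x y, V x y, W y z)
          obtain ⟨e1, e2, e3⟩ := hval x z hxz (U x y) (V x y) (W y z) a1 a2 a3
            (b4.trans hUeq.symm) (fun h => b5 (h.trans hUeq)) b6 hvw2
          rw [e2, e3]
          have hbv2 : b (V y z) = b (W x y) := by rw [hw1v2]
          rw [hbv2] at hG2
          by_cases h13 : b (V x y) = b (W y z)
          · rw [if_pos h13]
            by_cases h12 : b (V x y) = b (W x y)
            · rw [if_pos h12] at hG1
              rw [if_pos (h12.symm.trans h13)] at hG2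
              cases hbv : b (V x y) with
              | false =>
                rw [if_neg (by simp [hbv])] at hG1
                rw [if_neg (by rw [← h12]; simp [hbv])] at hG2
                rw [if_neg (by simp [hbv])]
                exact rtrans _ _ _ hG1 hG2
              | true =>
                rw [if_pos hbv] at hG1
                rw [if_pos (h12 ▸ hbv)] at hG2
                rw [if_pos (Eq.refl true)]
                exact rtrans _ _ _ hG2 hG1
            · exfalso
              rw [if_neg h12] at hG1
              rw [if_neg (fun h => h12 (h13.trans h.symm))] at hG2
              exact h12 (hG1.trans hG2.symm)
          · rw [if_neg h13]
            by_cases h12 : b (V x y) = b (W x y)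
            · rw [if_neg (fun h => h13 (h12.trans h))] at hG2
              exact h12.trans hG2
            · rw [if_neg h12] at hG1
              exact hG1
      · rcases cd_anc_total hU1y hU2y with h12 | h21
        · -- U x y strictly above U y z
          obtain ⟨c0, hc1, hc2, hc3⟩ := cd_exists_child h12 hUeq
          have hc0 : c0 = W x y := cd_children_eq hc1 hc2 a4 a5 (cd_anc_trans hc3 hU2y) a6
          have hWz : S.Anc (W x y) (ι z) :=
            cd_anc_trans (hc0 ▸ hc3) (cd_anc_trans (cd_anc_of_parent b4) b6)
          obtain ⟨e1, e2, e3⟩ := hval x z hxz (U x y) (V x y) (W x y) a1 a2 a3 a4 a5 hWz a7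
          rw [e2, e3]
          by_cases h12' : b (V x y) = b (W x y)
          · rw [if_pos h12'] at hG1 ⊢
            cases hbv : b (V x y) with
            | false =>
              rw [if_neg (by simp [hbv])] at hG1
              rw [if_neg (by simp)]
              rcases rtot x z with h | h
              · exact h
              · exfalso
                have : S.Anc (W x y) (ι x) := hr.2 (W x y) z x y h hG1 hWz a6
                exact a7 (cd_children_eq a1 a2 a4 a5 a3 this)
            | true =>
              rw [if_pos hbv] at hG1
              rw [if_pos (Eq.refl true)]
              rcases rtot z x with h | h
              · exact h
              · exfalso
                have : S.Anc (W x y) (ι x) := hr.2 (W x y) y x z hG1 h a6 hWz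
                exact a7 (cd_children_eq a1 a2 a4 a5 a3 this)
          · rw [if_neg h12'] at hG1 ⊢
            exact hG1
        · -- U y z strictly above U x y
          obtain ⟨c0, hc1, hc2, hc3⟩ := cd_exists_child h21 (Ne.symm hUeq)
          have hc0 : c0 = V y z := cd_children_eq hc1 hc2 b1 b2 (cd_anc_trans hc3 hU1y) b3
          have hVx : S.Anc (V y z) (ι x) :=
            cd_anc_trans (hc0 ▸ hc3) (cd_anc_trans (cd_anc_of_parent a1) a3)
          obtain ⟨e1, e2, e3⟩ := hval x z hxz (U y z) (V y z) (W y z) b1 b2 hVx b4 b5 b6 b7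
          rw [e2, e3]
          by_cases h23 : b (V y z) = b (W y z)
          · rw [if_pos h23] at hG2 ⊢
            cases hbv : b (V y z) with
            | false =>
              rw [if_neg (by simp [hbv])] at hG2
              rw [if_neg (by simp)]
              rcases rtot x z with h | h
              · exact h
              · exfalso
                have : S.Anc (V y z) (ι z) := hr.2 (V y z) y z x hG2 h b3 hVx
                exact b7 (cd_children_eq b1 b2 b4 b5 this b6)
            | true =>
              rw [if_pos hbv] at hG2
              rw [if_pos (Eq.refl true)]
              rcases rtot z x with h | h
              · exact h
              · exfalso
                have : S.Anc (V y z) (ι z) := hr.2 (V y z) x z y h hG2 hVx b3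
                exact b7 (cd_children_eq b1 b2 b4 b5 this b6)
          · rw [if_neg h23] at hG2 ⊢
            exact hG2
    · -- antisymmetry
      intro x y h1 h2
      rcases h1 with rfl | ⟨hne, hG1⟩
      · rfl
      rcases h2 with h | ⟨-, hG2⟩
      · exact h.symm
      obtain ⟨s1, s2⟩ := hswap x y hne
      simp only [cdG] at hG1 hG2
      rw [s1, s2] at hG2
      by_cases hb : b (V x y) = b (W x y)
      · rw [if_pos hb] at hG1
        rw [if_pos hb.symm] at hG2
        cases hbv : b (V x y) with
        | false =>
          rw [if_neg (by simp [hbv])] at hG1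
          rw [if_neg (by rw [← hb, hbv]; simp)] at hG2
          exact ranti _ _ hG1 hG2
        | true =>
          rw [if_pos hbv] at hG1
          rw [if_pos (hb ▸ hbv)] at hG2
          exact ranti _ _ hG2 hG1
      · rw [if_neg hb] at hG1
        rw [if_neg (fun h => hb h.symm)] at hG2
        exact absurd (hG1.trans hG2.symm) hb
    · -- totality
      intro x y
      by_cases hne : x = y
      · exact Or.inl (Or.inl hne)
      obtain ⟨s1, s2⟩ := hswap x y hne
      by_cases hb : b (V x y) = b (W x y)
      · cases hbv : b (V x y) with
        | false =>
          rcases rtot x y with h | h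
          · refine Or.inl (Or.inr ⟨hne, ?_⟩)
            simp only [cdG]
            rw [if_pos hb, if_neg (by simp [hbv])]
            exact h
          · refine Or.inr (Or.inr ⟨Ne.symm hne, ?_⟩)
            simp only [cdG]
            rw [s1, s2, if_pos hb.symm, if_neg (by rw [← hb, hbv]; simp)]
            exact h
        | true =>
          rcases rtot x y with h | h
          · refine Or.inr (Or.inr ⟨Ne.symm hne, ?_⟩)
            simp only [cdG]
            rw [s1, s2, if_pos hb.symm, if_pos (hb ▸ hbv)]
            exact h
          · refine Or.inl (Or.inr ⟨hne, ?_⟩)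
            simp only [cdG]
            rw [if_pos hb, if_pos hbv]
            exact h
      · by_cases hc : b (V x y) = c
        · refine Or.inl (Or.inr ⟨hne, ?_⟩)
          simp only [cdG]
          rw [if_neg hb]
          exact hc
        · have hcw : b (W x y) = c := by
            cases hfv : b (V x y) <;> cases hfw : b (W x y) <;> cases c <;>
              rw [hfv, hfw] at hb <;> rw [hfv] at hc <;>
              first
              | rfl
              | exact absurd rfl hb
              | exact absurd rfl hc
          refine Or.inr (Or.inr ⟨Ne.symm hne, ?_⟩)
          simp only [cdG]
          rw [s1, s2, if_neg (fun h => hb h.symm)]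
          exact hcw
  · -- specification
    intro x y hxy u v w h1 h2 h3 h4 h5 h6 h7
    obtain ⟨e1, e2, e3⟩ := hval x y hxy u v w h1 h2 h3 h4 h5 h6 h7
    simp only [cdG, e2, e3]
    simp [hxy]

theorem color_detection (C : Type) [Fintype C] [Nonempty C] :
    ∃ dir : Prop → (Fin (2 * Nat.clog 2 (Fintype.card C)) → Prop) → C × C,
      ∀ (ν : Type) [Fintype ν] (S : ParentTree ν) (Z : Type) [Fintype Z] (ι : Z → ν),
        Function.Injective ι → (∀ v, S.IsLeaf v ↔ ∃ z, ι z = v) →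
        2 ≤ Fintype.card Z →
        ∀ r : Z → Z → Prop, ConsistentOrder S ι r →
        ∀ φ : ν → C,
        ∃ L : Fin (2 * Nat.clog 2 (Fintype.card C)) → Z → Z → Prop,
          (∀ i, IsLinearOrder Z (L i)) ∧
          ∀ x y : Z, x ≠ y →
            ∀ u v w : ν, S.IsLCA u (ι x) (ι y) →
              S.parent v = u → v ≠ u → S.Anc v (ι x) →
              S.parent w = u → w ≠ u → S.Anc w (ι y) →
              dir (r x y) (fun i => L i x y) = (φ v, φ w) := by
  classical
  set m := Nat.clog 2 (Fintype.card C) with hm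
  have hcard : Fintype.card C ≤ Fintype.card (Fin m → Bool) := by
    rw [Fintype.card_fun, Fintype.card_bool, Fintype.card_fin]
    exact Nat.le_pow_clog one_lt_two _
  obtain ⟨enc⟩ : Nonempty (C ↪ (Fin m → Bool)) :=
    Function.Embedding.nonempty_of_card_le hcard
  set dec : (Fin m → Bool) → C := Function.invFun enc with hdecdef
  have hdecenc : ∀ a : C, dec (enc a) = a := fun a =>
    Function.leftInverse_invFun enc.injective a
  refine ⟨fun s ℓ =>
      (dec (fun j => if s then !(decide (ℓ (cdIdx0 m j))) else decide (ℓ (cdIdx1 m j))),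
       dec (fun j => if s then !(decide (ℓ (cdIdx1 m j))) else decide (ℓ (cdIdx0 m j)))), ?_⟩
  intro ν' _ S Z _ ι hinj hleaf _ r hr φ
  haveI : IsLinearOrder Z r := hr.1
  have rtot : ∀ a b : Z, r a b ∨ r b a := fun a b => Std.Total.total a b
  have ranti : ∀ a b : Z, r a b → r b a → a = b := fun a b h1 h2 => Std.Antisymm.antisymm a b h1 h2
  have horder := fun i : Fin (2 * m) =>
    cd_order_exists S ι hinj hleaf r hr (fun n => enc (φ n) (cdBitIdx m i)) (cdCBit m i)
  choose L hLlin hLspec using horder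
  refine ⟨L, hLlin, ?_⟩
  intro x y hxy u v w hlca hpv hvu hvx hpw hwu hwy
  have hvw : v ≠ w := by
    rintro rfl
    exact hvu (cd_anc_antisymm (hlca.2.2 v hvx hwy) (cd_anc_of_parent hpv))
  have hLs := fun i : Fin (2 * m) => hLspec i x y hxy u v w hpv hvu hvx hpw hwu hwy hvw
  dsimp only
  rw [Prod.mk.injEq]
  constructor
  · -- first component
    suffices h : (fun j : Fin m => if r x y then !(decide (L (cdIdx0 m j) x y))
        else decide (L (cdIdx1 m j) x y)) = enc (φ v) by rw [h, hdecenc]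
    funext j
    have h0 := hLs (cdIdx0 m j)
    have h1 := hLs (cdIdx1 m j)
    rw [cdBitIdx_idx0, cdCBit_idx0] at h0
    rw [cdBitIdx_idx1, cdCBit_idx1] at h1
    by_cases hrxy : r x y
    · have hryx : ¬ r y x := fun h => hxy (ranti _ _ hrxy h)
      rw [if_pos hrxy]
      cases hv1 : enc (φ v) j <;> cases hw1 : enc (φ w) j <;>
        rw [hv1, hw1] at h0 <;> simp [hrxy, hryx] at h0 <;> simp [h0]
    · have hryx : r y x := (rtot x y).resolve_left hrxy
      rw [if_neg hrxy]
      cases hv1 : enc (φ v) j <;> cases hw1 : enc (φ w) j <;>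
        rw [hv1, hw1] at h1 <;> simp [hrxy, hryx] at h1 <;> simp [h1]
  · -- second component
    suffices h : (fun j : Fin m => if r x y then !(decide (L (cdIdx1 m j) x y))
        else decide (L (cdIdx0 m j) x y)) = enc (φ w) by rw [h, hdecenc]
    funext j
    have h0 := hLs (cdIdx0 m j)
    have h1 := hLs (cdIdx1 m j)
    rw [cdBitIdx_idx0, cdCBit_idx0] at h0
    rw [cdBitIdx_idx1, cdCBit_idx1] at h1
    by_cases hrxy : r x y
    · have hryx : ¬ r y x := fun h => hxy (ranti _ _ hrxy h)
      rw [if_pos hrxy]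
      cases hv1 : enc (φ v) j <;> cases hw1 : enc (φ w) j <;>
        rw [hv1, hw1] at h1 <;> simp [hrxy, hryx] at h1 <;> simp [h1]
    · have hryx : r y x := (rtot x y).resolve_left hrxy
      rw [if_neg hrxy]
      cases hv1 : enc (φ v) j <;> cases hw1 : enc (φ w) j <;>
        rw [hv1, hw1] at h0 <;> simp [hrxy, hryx] at h0 <;> simp [h0]
end

section
/- Let (X,≤) be a finite poset, let (T,B) be a tree decomposition of the cover graph of (X,≤), and let u, v, w be nodes of T such that w lies on the path from u to v in T. If x ∈ B(u), y ∈ B(v), and x ≤ y, then there is z ∈ B(w) such that x ≤ z ≤ y. -/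
open SimpleGraph in
/-- Helper: convexity along a path between two vertices of a connected induced set. -/
lemma tree_path_mem_of_induce_connected {ν : Type} {T : SimpleGraph ν} (hT : T.IsTree)
    (S : Set ν) (hS : (T.induce S).Connected) {u v : ν} (hu : u ∈ S) (hv : v ∈ S)
    (p : T.Walk u v) (hp : p.IsPath) {w : ν} (hw : w ∈ p.support) : w ∈ S := by
  classical
  obtain ⟨q⟩ := hS ⟨u, hu⟩ ⟨v, hv⟩
  let q' : T.Walk u v := q.map (SimpleGraph.Embedding.induce S).toHom
  have hq' : q'.toPath.1.IsPath := q'.toPath.2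
  have hpq : p = q'.toPath.1 := (hT.existsUnique_path u v).unique hp hq'
  have hw' : w ∈ q'.support := q'.support_toPath_subset (hpq ▸ hw)
  rw [show q'.support = q.support.map (SimpleGraph.Embedding.induce S).toHom from Walk.support_map ..] at hw'
  obtain ⟨⟨a, ha⟩, _, rfl⟩ := List.mem_map.mp hw'
  exact ha

open SimpleGraph in
/-- Helper: a vertex on the `u`–`v` path lies on the `u`–`t` path or the `t`–`v` path. -/
lemma tree_path_split {ν : Type} {T : SimpleGraph ν} (hT : T.IsTree)
    {u v : ν} (p : T.Walk u v) (hp : p.IsPath) {w : ν} (hw : w ∈ p.support) (t : ν) :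
    (∃ q : T.Walk u t, q.IsPath ∧ w ∈ q.support) ∨
    (∃ q : T.Walk t v, q.IsPath ∧ w ∈ q.support) := by
  classical
  obtain ⟨r1⟩ := hT.isConnected.preconnected u t
  obtain ⟨r2⟩ := hT.isConnected.preconnected t v
  let q1 := r1.toPath
  let q2 := r2.toPath
  let c : T.Walk u v := q1.1.append q2.1
  have hpc : p = c.toPath.1 := (hT.existsUnique_path u v).unique hp c.toPath.2
  have hwc : w ∈ c.support := c.support_toPath_subset (hpc ▸ hw)
  rw [Walk.mem_support_append_iff] at hwc
  rcases hwc with h | h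
  · exact Or.inl ⟨q1.1, q1.2, h⟩
  · exact Or.inr ⟨q2.1, q2.2, h⟩

/-- Helper: a covering pair is adjacent in the cover graph of `≤`. -/
lemma covBy_adj_coverGraph {X : Type} [PartialOrder X] {a c : X} (h : a ⋖ c) :
    (coverGraphOf ((· ≤ ·) : X → X → Prop)).Adj a c := by
  refine Or.inl ⟨h.ne, h.le, fun z h1 h2 => ?_⟩
  by_contra hz
  push_neg at hz
  exact h.2 (h1.lt_of_ne (Ne.symm hz.1)) (h2.lt_of_ne hz.2)

/-! ### STATEMENT 9: convexity of tree decompositions of cover graphs -/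

theorem tree_decomp_convexity (X : Type) [PartialOrder X] [Fintype X] (ν : Type)
    (td : TreeDecomp (coverGraphOf ((· ≤ ·) : X → X → Prop)) ν)
    (u v w : ν)
    (hw : ∃ p : td.tree.Walk u v, p.IsPath ∧ w ∈ p.support)
    (x y : X) (hx : x ∈ td.bag u) (hy : y ∈ td.bag v) (hxy : x ≤ y) :
    ∃ z ∈ td.bag w, x ≤ z ∧ z ≤ y := by
  classical
  have : LocallyFiniteOrder X := Fintype.toLocallyFiniteOrder
  have hchain : Relation.ReflTransGen (· ⋖ ·) x y := le_iff_reflTransGen_covBy.mp hxy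
  suffices H : ∀ a : X, Relation.ReflTransGen (· ⋖ ·) a y →
      ∀ u' : ν, a ∈ td.bag u' → (∃ q : td.tree.Walk u' v, q.IsPath ∧ w ∈ q.support) →
      ∃ z ∈ td.bag w, a ≤ z ∧ z ≤ y by
    exact H x hchain u hx hw
  intro a ha
  induction ha using Relation.ReflTransGen.head_induction_on with
  | refl =>
    rintro u' hu' ⟨q, hq, hwq⟩
    exact ⟨y, tree_path_mem_of_induce_connected td.isTree _ (td.bag_connected y)
      hu' hy q hq hwq, le_refl y, le_refl y⟩
  | head hac hcy ih =>
    rintro u' hu' ⟨q, hq, hwq⟩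
    rename_i a c
    have hcy' : c ≤ y := le_iff_reflTransGen_covBy.mpr hcy
    obtain ⟨t, hat, hct⟩ := td.bag_edge a c (covBy_adj_coverGraph hac)
    rcases tree_path_split td.isTree q hq hwq t with ⟨q1, hq1, hwq1⟩ | ⟨q2, hq2, hwq2⟩
    · exact ⟨a, tree_path_mem_of_induce_connected td.isTree _ (td.bag_connected a)
        hu' hat q1 hq1 hwq1, le_refl a, hac.le.trans hcy'⟩
    · obtain ⟨z, hzw, hz1, hz2⟩ := ih t hct ⟨q2, hq2, hwq2⟩
      exact ⟨z, hzw, hac.le.trans hz1, hz2⟩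
end

section
/- For every integer t ≥ 1, every finite poset whose cover graph has treewidth at most t−1 has NLC-width at most 4^t. -/
/-! ### Auxiliary development -/


open SimpleGraph

namespace NLCAux

variable {ν : Type*} {T : SimpleGraph ν}

/-- The side of the tree edge `cd` containing `d`: vertices reachable from `d`
after deleting the edge. -/
def SideR (T : SimpleGraph ν) (c d : ν) : Set ν :=
  {β | (T.deleteEdges {s(c,d)}).Reachable d β}

lemma sideR_swap_set {c d : ν} : ({s(d,c)} : Set (Sym2 ν)) = {s(c,d)} := by
  rw [Sym2.eq_swap]

lemma mem_sideR {c d β : ν} :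
    β ∈ SideR T c d ↔ (T.deleteEdges {s(c,d)}).Reachable d β := Iff.rfl

lemma self_mem_sideR (T : SimpleGraph ν) (c d : ν) : d ∈ SideR T c d :=
  Reachable.refl d

lemma bridge (hT : T.IsTree) {c d : ν} (h : T.Adj c d) :
    ¬ (T.deleteEdges {s(c,d)}).Reachable c d := by
  have hb := (isAcyclic_iff_forall_adj_isBridge.mp hT.IsAcyclic) h
  rw [isBridge_iff] at hb
  exact hb

private lemma dichotomy_aux (hT : T.IsTree) {c d : ν} {β γ : ν} (w : T.Walk β γ)
    (hγ : γ ∈ SideR T c d ∨ γ ∈ SideR T d c) :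
    β ∈ SideR T c d ∨ β ∈ SideR T d c := by
  induction w with
  | nil => exact hγ
  | @cons a b _ hab w ih =>
    by_cases he : s(a,b) = s(c,d)
    · obtain ⟨hac, _⟩ | ⟨had, _⟩ := Sym2.eq_iff.mp he
      · subst hac
        exact Or.inr (self_mem_sideR T d a)
      · subst had
        exact Or.inl (self_mem_sideR T c a)
    · have hba : s(b,a) = s(a,b) := Sym2.eq_swap
      rcases ih hγ with h1 | h1
      · left
        rw [mem_sideR] at h1 ⊢
        refine h1.trans (Adj.reachable ?_)
        rw [SimpleGraph.deleteEdges_adj]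
        refine ⟨hab.symm, ?_⟩
        rw [Set.mem_singleton_iff, hba]
        exact he
      · right
        rw [mem_sideR, sideR_swap_set] at h1 ⊢
        refine h1.trans (Adj.reachable ?_)
        rw [SimpleGraph.deleteEdges_adj]
        refine ⟨hab.symm, ?_⟩
        rw [Set.mem_singleton_iff, hba]
        exact he

lemma side_dichotomy (hT : T.IsTree) {c d : ν} (h : T.Adj c d) (β : ν) :
    β ∈ SideR T c d ∨ β ∈ SideR T d c := by
  obtain ⟨w⟩ := hT.isConnected β c
  exact dichotomy_aux hT w (Or.inr (self_mem_sideR T d c))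

lemma side_not_both (hT : T.IsTree) {c d : ν} (h : T.Adj c d) {β : ν}
    (h1 : β ∈ SideR T c d) (h2 : β ∈ SideR T d c) : False := by
  rw [mem_sideR] at h1
  rw [mem_sideR, sideR_swap_set] at h2
  exact bridge hT h (h2.trans h1.symm)

lemma not_mem_sideR_self (hT : T.IsTree) {c d : ν} (h : T.Adj c d) :
    c ∉ SideR T c d := fun hc =>
  side_not_both hT h hc (self_mem_sideR T d c)

/-- A walk in `T` avoiding the vertex `c` stays inside `SideR c d`. -/
lemma walk_avoid_same_side {c d : ν}
    {β γ : ν} (w : T.Walk β γ) (hc : c ∉ w.support)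
    (hβ : β ∈ SideR T c d) : γ ∈ SideR T c d := by
  rw [mem_sideR] at hβ ⊢
  refine hβ.trans ⟨w.toDeleteEdges _ ?_⟩
  intro e he
  simp only [Set.mem_singleton_iff]
  intro hedge
  subst hedge
  exact hc (w.fst_mem_support_of_mem_edges he)

/-- A walk between opposite sides passes through both `c` and `d`. -/
lemma walk_cross (hT : T.IsTree) {c d : ν} (h : T.Adj c d)
    {β γ : ν} (w : T.Walk β γ)
    (hβ : β ∈ SideR T c d) (hγ : γ ∈ SideR T d c) :
    c ∈ w.support ∧ d ∈ w.support := by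
  by_cases hc : s(c,d) ∈ w.edges
  · exact ⟨w.fst_mem_support_of_mem_edges hc, w.snd_mem_support_of_mem_edges hc⟩
  · exfalso
    have hr : (T.deleteEdges {s(c,d)}).Reachable β γ := by
      refine ⟨w.toDeleteEdges _ ?_⟩
      intro e he
      simp only [Set.mem_singleton_iff]
      intro hedge; subst hedge; exact hc he
    exact side_not_both hT h (Reachable.trans hβ hr) hγ

/-- Every vertex `β ≠ c` lies on the `d`-side for some neighbor `d` of `c`. -/
lemma exists_side (hT : T.IsTree) {c β : ν} (hne : β ≠ c) :
    ∃ d, T.Adj c d ∧ β ∈ SideR T c d := by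
  obtain ⟨w, hw⟩ := (hT.isConnected c β).exists_path_of_dist
  cases w with
  | nil => exact absurd rfl hne.symm
  | @cons _ d _ hcd w' =>
    refine ⟨d, hcd, ?_⟩
    have hp : (Walk.cons hcd w').IsPath := hw.1
    have hcs : c ∉ w'.support := by
      have := hp.support_nodup
      simp only [Walk.support_cons, List.nodup_cons] at this
      exact this.1
    exact walk_avoid_same_side w' hcs (self_mem_sideR T c d)

/-- Distinct sides around `c` are disjoint. -/
lemma sides_disjoint (hT : T.IsTree) {c d₁ d₂ : ν} (h1 : T.Adj c d₁)
    (h2 : T.Adj c d₂) (hne : d₁ ≠ d₂) {β : ν}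
    (hβ1 : β ∈ SideR T c d₁) (hβ2 : β ∈ SideR T c d₂) : False := by
  classical
  have hedge_ne : s(c,d₁) ≠ s(c,d₂) := by
    intro hh
    obtain ⟨-, h'⟩ | ⟨h', -⟩ := Sym2.eq_iff.mp hh
    · exact hne h'
    · exact h2.ne (h'.symm ▸ rfl) |>.elim
  rw [mem_sideR] at hβ1
  obtain ⟨w⟩ := hβ1
  by_cases hc : c ∈ w.support
  · exact bridge hT h1 (Reachable.symm ⟨w.takeUntil c hc⟩)
  · -- w : Walk (T∖cd₁) d₁ β avoids c, hence avoids edge s(c,d₂)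
    have hw2 : ∀ e ∈ w.edges, e ∈ (T.deleteEdges {s(c,d₂)}).edgeSet := by
      intro e he
      have h1' : e ∈ (T.deleteEdges {s(c,d₁)}).edgeSet := w.edges_subset_edgeSet he
      rw [edgeSet_deleteEdges] at h1' ⊢
      refine ⟨h1'.1, ?_⟩
      simp only [Set.mem_singleton_iff]
      intro hedge
      subst hedge
      exact hc (w.fst_mem_support_of_mem_edges he)
    have hr : (T.deleteEdges {s(c,d₂)}).Reachable d₁ β := ⟨w.transfer _ hw2⟩
    have hcd1 : (T.deleteEdges {s(c,d₂)}).Adj d₁ c := by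
      rw [SimpleGraph.deleteEdges_adj]
      refine ⟨h1.symm, ?_⟩
      rw [Set.mem_singleton_iff]
      intro hh
      exact hedge_ne (by rw [← hh, Sym2.eq_swap])
    have : (T.deleteEdges {s(c,d₂)}).Reachable c d₂ :=
      (((hβ2 : (T.deleteEdges {s(c,d₂)}).Reachable d₂ β).trans hr.symm).trans
        hcd1.reachable).symm
    exact bridge hT h2 this
end NLCAux

namespace NLCAux2
open NLCAux
variable {ν : Type*} {T : SimpleGraph ν}

/-- Nesting of sides: going further from the edge `pc` stays on the far side. -/
lemma side_nest (hT : T.IsTree) {p c d : ν} (hpc : T.Adj p c) (hcd : T.Adj c d)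
    (hne : d ≠ p) : SideR T c d ⊆ SideR T p c := by
  intro β hβ
  rcases side_dichotomy hT hpc β with h | h
  · exact h
  · exact absurd hβ (fun hβ' => sides_disjoint hT hcd hpc.symm hne hβ' h)

/-- Every walk from `c` to the far side of the edge `cd` passes through `d`. -/
lemma walk_to_side_mem (hT : T.IsTree) {c d β : ν} (hcd : T.Adj c d)
    (hβ : β ∈ SideR T c d) (w : T.Walk c β) : d ∈ w.support := by
  by_cases he : s(c,d) ∈ w.edges
  · exact w.snd_mem_support_of_mem_edges he
  · exfalso
    have hr : (T.deleteEdges {s(c,d)}).Reachable c β := by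
      refine ⟨w.toDeleteEdges _ ?_⟩
      intro e hee
      simp only [Set.mem_singleton_iff]
      intro hedge; subst hedge; exact he hee
    exact bridge hT hcd (hr.trans (hβ : (T.deleteEdges {s(c,d)}).Reachable d β).symm)

/-- Crossing to the far side strictly decreases the distance. -/
lemma side_dist_lt (hT : T.IsTree) {c d β : ν} (hcd : T.Adj c d)
    (hβ : β ∈ SideR T c d) : T.dist d β < T.dist c β := by
  classical
  obtain ⟨w, hw⟩ := hT.isConnected.exists_walk_length_eq_dist c β
  have hd : d ∈ w.support := walk_to_side_mem hT hcd hβ w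
  have hsplit : (w.takeUntil d hd).length + (w.dropUntil d hd).length = w.length := by
    rw [← SimpleGraph.Walk.length_append, SimpleGraph.Walk.take_spec]
  have h1 : T.dist d β ≤ (w.dropUntil d hd).length := SimpleGraph.dist_le _
  have h2 : 1 ≤ (w.takeUntil d hd).length := by
    by_contra hh
    push_neg at hh
    interval_cases h : (w.takeUntil d hd).length
    · exact hcd.ne (SimpleGraph.Walk.eq_of_length_eq_zero h)
  omega

end NLCAux2


section PosetAux
open NLCAux NLCAux2 SimpleGraph Relation

variable {X : Type} [PartialOrder X] [Fintype X]

lemma covChain_of_le {x y : X} (h : x ≤ y) : Relation.ReflTransGen (· ⋖ ·) x y := by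
  classical
  letI : LocallyFiniteOrder X := Fintype.toLocallyFiniteOrder
  exact le_iff_reflTransGen_covBy.mp h

lemma le_of_covChain {x y : X} (h : Relation.ReflTransGen (· ⋖ ·) x y) : x ≤ y := by
  induction h with
  | refl => exact le_rfl
  | tail _ h2 ih => exact ih.trans h2.le

lemma coverGraph_adj_of_covBy {x y : X} (h : x ⋖ y) :
    (coverGraphOf ((· ≤ ·) : X → X → Prop)).Adj x y := by
  refine Or.inl ?_
  refine ⟨h.ne, h.le, ?_⟩
  intro z h1 h2
  by_contra hz
  push_neg at hz
  exact h.2 (lt_of_le_of_ne h1 (Ne.symm hz.1)) (lt_of_le_of_ne h2 hz.2)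

variable {ν : Type} (td : TreeDecomp (coverGraphOf ((· ≤ ·) : X → X → Prop)) ν)

/-- Some bag contains `x`. -/
lemma exists_bag (x : X) : ∃ β, x ∈ td.bag β := by
  obtain ⟨⟨β, hβ⟩⟩ := (td.bag_connected x).nonempty
  exact ⟨β, hβ⟩

/-- Between two bags containing `x` there is a walk all of whose bags contain `x`. -/
lemma bag_walk {x : X} {β₁ β₂ : ν} (h1 : x ∈ td.bag β₁) (h2 : x ∈ td.bag β₂) :
    ∃ w : td.tree.Walk β₁ β₂, ∀ γ ∈ w.support, x ∈ td.bag γ := by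
  obtain ⟨w⟩ := (td.bag_connected x) ⟨β₁, h1⟩ ⟨β₂, h2⟩
  refine ⟨w.map (SimpleGraph.Embedding.induce _).toHom, ?_⟩
  intro γ hγ
  replace hγ : γ ∈ (w.map (SimpleGraph.Embedding.induce _).toHom).support := hγ
  rw [SimpleGraph.Walk.support_map, List.mem_map] at hγ
  obtain ⟨⟨γ', hγ'⟩, -, rfl⟩ := hγ
  exact hγ'

/-- If the bags of `x` meet both sides of a tree edge, then `x` is in both endpoint bags. -/
lemma bag_cross (hT : td.tree.IsTree) {c d : ν} (h : td.tree.Adj c d) {x : X}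
    {β₁ β₂ : ν} (h1 : x ∈ td.bag β₁) (h2 : x ∈ td.bag β₂)
    (hs1 : β₁ ∈ SideR td.tree d c) (hs2 : β₂ ∈ SideR td.tree c d) :
    x ∈ td.bag c ∧ x ∈ td.bag d := by
  obtain ⟨w, hw⟩ := bag_walk td h2 h1
  obtain ⟨hc, hd⟩ := walk_cross hT h w hs2 hs1
  exact ⟨hw c hc, hw d hd⟩

/-- If `x ∉ bag c` and one bag of `x` is on the `d`-side, all are. -/
lemma bag_same_side {c d : ν} {x : X}
    (hxc : x ∉ td.bag c) {β₀ : ν} (h0 : x ∈ td.bag β₀) (hs : β₀ ∈ SideR td.tree c d)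
    {β : ν} (hβ : x ∈ td.bag β) : β ∈ SideR td.tree c d := by
  obtain ⟨w, hw⟩ := bag_walk td h0 hβ
  refine walk_avoid_same_side w ?_ hs
  intro hc
  exact hxc (hw c hc)

/-- Confinement of all bags of `x` to a node set. -/
def Conf (td : TreeDecomp (coverGraphOf ((· ≤ ·) : X → X → Prop)) ν)
    (N : Set ν) (x : X) : Prop := ∀ β, x ∈ td.bag β → β ∈ N

/-- If some bag of `x` is outside the side `SideR p c` and some inside,
then `x ∈ bag p ∩ bag c`. -/
lemma bag_cross' (hT : td.tree.IsTree) {p c : ν} (hpc : td.tree.Adj p c) {x : X}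
    {β₁ β₂ : ν} (h1 : x ∈ td.bag β₁) (h2 : x ∈ td.bag β₂)
    (hs1 : β₁ ∉ SideR td.tree p c) (hs2 : β₂ ∈ SideR td.tree p c) :
    x ∈ td.bag p ∧ x ∈ td.bag c := by
  have hs1' : β₁ ∈ SideR td.tree c p := by
    rcases side_dichotomy hT hpc β₁ with h | h
    · exact absurd h hs1
    · exact h
  exact bag_cross td hT hpc h1 h2 hs1' hs2

/-- Separation lemma, downward: a chain from an unconfined `z` to a confined `x`
crosses `bag p ∩ bag c`. -/
lemma lemSep_down (hT : td.tree.IsTree) {p c : ν} (hpc : td.tree.Adj p c)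
    {z x : X} (hzx : z ≤ x)
    (hz : ∃ β, z ∈ td.bag β ∧ β ∉ SideR td.tree p c)
    (hx : Conf td (SideR td.tree p c) x) :
    ∃ s, s ∈ td.bag p ∧ s ∈ td.bag c ∧ z ≤ s ∧ s ≤ x := by
  classical
  have hch := covChain_of_le hzx
  clear hzx
  induction hch using Relation.ReflTransGen.head_induction_on with
  | refl =>
    obtain ⟨β, hβ1, hβ2⟩ := hz
    exact absurd (hx β hβ1) hβ2
  | @head a b hab hbx ih =>
    by_cases hb : ∃ β, b ∈ td.bag β ∧ β ∉ SideR td.tree p c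
    · obtain ⟨s, h1, h2, h3, h4⟩ := ih hb
      exact ⟨s, h1, h2, hab.le.trans h3, h4⟩
    · push_neg at hb
      -- b is confined; the cover edge a–b lies in some bag on the inside,
      -- while a has a bag outside: so a ∈ bag p ∩ bag c.
      obtain ⟨β₀, ha0, hb0⟩ := td.bag_edge a b (coverGraph_adj_of_covBy hab)
      obtain ⟨β, haβ, hβout⟩ := hz
      have hin : β₀ ∈ SideR td.tree p c := hb β₀ hb0
      obtain ⟨h1, h2⟩ := bag_cross' td hT hpc haβ ha0 hβout hin
      exact ⟨a, h1, h2, le_rfl, hab.le.trans (le_of_covChain hbx)⟩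

/-- Separation lemma, upward: a chain from a confined `x` up to an unconfined `z`
crosses `bag p ∩ bag c`. -/
lemma lemSep_up (hT : td.tree.IsTree) {p c : ν} (hpc : td.tree.Adj p c)
    {z x : X} (hxz : x ≤ z)
    (hz : ∃ β, z ∈ td.bag β ∧ β ∉ SideR td.tree p c)
    (hx : Conf td (SideR td.tree p c) x) :
    ∃ s, s ∈ td.bag p ∧ s ∈ td.bag c ∧ x ≤ s ∧ s ≤ z := by
  classical
  have hch := covChain_of_le hxz
  clear hxz
  induction hch with
  | refl =>
    obtain ⟨β, hβ1, hβ2⟩ := hz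
    exact absurd (hx β hβ1) hβ2
  | @tail b znew hxb hbz ih =>
    by_cases hb : ∃ β, b ∈ td.bag β ∧ β ∉ SideR td.tree p c
    · obtain ⟨s, h1, h2, h3, h4⟩ := ih hb
      exact ⟨s, h1, h2, h3, h4.trans hbz.le⟩
    · push_neg at hb
      obtain ⟨β₀, hb0, hz0⟩ := td.bag_edge b znew (coverGraph_adj_of_covBy hbz)
      obtain ⟨β, hzβ, hβout⟩ := hz
      have hin : β₀ ∈ SideR td.tree p c := hb β₀ hb0
      obtain ⟨h1, h2⟩ := bag_cross' td hT hpc hzβ hz0 hβout hin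
      exact ⟨znew, h1, h2, (le_of_covChain hxb).trans hbz.le, le_rfl⟩

end PosetAux


namespace BTree

variable {Y : Type*}

lemma subtreeAt_append (t : BTree Y) (p q : List Bool) :
    t.subtreeAt (p ++ q) = (t.subtreeAt p).bind (fun t' => t'.subtreeAt q) := by
  induction p generalizing t with
  | nil => simp [BTree.subtreeAt]
  | cons b p ih =>
    cases t with
    | leaf x => simp [BTree.subtreeAt]
    | node l r =>
      show BTree.subtreeAt (if b then r else l) (p ++ q) = _
      rw [ih]
      rfl

lemma isPos_prefix {t : BTree Y} {p q : List Bool} (h : t.IsPos q) (hpq : p <+: q) :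
    t.IsPos p := by
  obtain ⟨r, rfl⟩ := hpq
  unfold BTree.IsPos at h ⊢
  rw [subtreeAt_append] at h
  cases hh : t.subtreeAt p with
  | none => rw [hh] at h; simp at h
  | some t' => simp [hh]

lemma isPos_of_subtree_eq {t : BTree Y} {p : List Bool} {t' : BTree Y}
    (h : t.subtreeAt p = some t') : t.IsPos p := by
  unfold BTree.IsPos
  rw [h]; rfl

end BTree

lemma List.prefix_snoc_of_strict {p q : List Bool} (h : p <+: q) (hne : p ≠ q) :
    ∃ b, p ++ [b] <+: q := by
  obtain ⟨r, rfl⟩ := h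
  cases r with
  | nil => exact absurd (by simp) hne
  | cons b r => exact ⟨b, ⟨r, by simp⟩⟩

lemma List.ne_of_snoc_prefix {p : List Bool} {b : Bool} {q : List Bool}
    (h : p ++ [b] <+: q) : p ≠ q := by
  intro he
  subst he
  have := h.length_le
  simp at this

lemma List.prefix_of_snoc_prefix {p : List Bool} {b : Bool} {q : List Bool}
    (h : p ++ [b] <+: q) : p <+: q :=
  (List.prefix_append p [b]).trans h

noncomputable section GoodTreeSec
open scoped Classical

variable {X : Type} [PartialOrder X] [Fintype X]

/-- Everything visible strictly below the node `v`: leaves below `v` and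
elements of boundary sets at or below `v`. -/
def UnderT (tb : BTree X) (posf : X → List Bool) (Bf : List Bool → Finset X)
    (v : List Bool) : Set X :=
  {x | v <+: posf x} ∪ {x | ∃ w, tb.IsPos w ∧ v <+: w ∧ x ∈ Bf w}

lemma UnderT_mono {tb : BTree X} {posf : X → List Bool} {Bf : List Bool → Finset X}
    {v v' : List Bool} (h : v' <+: v) :
    UnderT tb posf Bf v ⊆ UnderT tb posf Bf v' := by
  rintro x (hx | ⟨w, h1, h2, h3⟩)
  · exact Or.inl (h.trans hx)
  · exact Or.inr ⟨w, h1, h.trans h2, h3⟩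

/-- A decorated binary tree witnessing enough separators for an NLC-decomposition
with `4^t` labels. -/
structure GoodTree (X : Type) [PartialOrder X] [Fintype X] (t : ℕ) where
  tb : BTree X
  posf : X → List Bool
  pos_spec : ∀ x, tb.subtreeAt (posf x) = some (BTree.leaf x)
  leaves_eq : tb.leaves = (Finset.univ : Finset X).val
  Bf : List Bool → Finset X
  Bcard : ∀ p, (Bf p).card ≤ t
  step : ∀ u b, tb.IsPos (u ++ [b]) → ∀ z ∈ Bf u, ∀ x ∈ UnderT tb posf Bf (u ++ [b]),
      (z ≤ x → ∃ s ∈ Bf (u ++ [b]), z ≤ s ∧ s ≤ x) ∧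
      (x ≤ z → ∃ s ∈ Bf (u ++ [b]), x ≤ s ∧ s ≤ z)
  split : ∀ u x y, (u ++ [false]) <+: posf x → (u ++ [true]) <+: posf y →
      ((x ≤ y ↔ ∃ z ∈ Bf u, x ≤ z ∧ z ≤ y) ∧ (y ≤ x ↔ ∃ z ∈ Bf u, y ≤ z ∧ z ≤ x))

namespace GoodTree

variable {t : ℕ} (G : GoodTree X t)

lemma P1list : ∀ (r : List Bool) (u v : List Bool), v = u ++ r → r ≠ [] →
    G.tb.IsPos v → ∀ z ∈ G.Bf u, ∀ x ∈ UnderT G.tb G.posf G.Bf v,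
      (z ≤ x → ∃ s ∈ G.Bf v, z ≤ s ∧ s ≤ x) ∧
      (x ≤ z → ∃ s ∈ G.Bf v, x ≤ s ∧ s ≤ z) := by
  intro r
  induction r with
  | nil => intro u v _ hne; exact absurd rfl hne
  | cons b r ih =>
    intro u v hv _ hpos z hz x hx
    by_cases hr : r = []
    · subst hr
      have : v = u ++ [b] := by simpa using hv
      subst this
      exact G.step u b hpos z hz x hx
    · have hmidv : v = (u ++ [b]) ++ r := by simp [hv]
      have hmidpos : G.tb.IsPos (u ++ [b]) := by
        refine BTree.isPos_prefix hpos ⟨r, hmidv.symm⟩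
      have hxmid : x ∈ UnderT G.tb G.posf G.Bf (u ++ [b]) := by
        refine UnderT_mono ⟨r, hmidv.symm⟩ hx
      constructor
      · intro hzx
        obtain ⟨s₁, hs₁, hzs₁, hs₁x⟩ := (G.step u b hmidpos z hz x hxmid).1 hzx
        obtain ⟨s, hs, h1, h2⟩ := (ih (u ++ [b]) v hmidv hr hpos s₁ hs₁ x hx).1 hs₁x
        exact ⟨s, hs, hzs₁.trans h1, h2⟩
      · intro hxz
        obtain ⟨s₁, hs₁, hxs₁, hs₁z⟩ := (G.step u b hmidpos z hz x hxmid).2 hxz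
        obtain ⟨s, hs, h1, h2⟩ := (ih (u ++ [b]) v hmidv hr hpos s₁ hs₁ x hx).2 hxs₁
        exact ⟨s, hs, h1, h2.trans hs₁z⟩

lemma P1 {u v : List Bool} (huv : u <+: v) (hne : u ≠ v) (hpos : G.tb.IsPos v) :
    ∀ z ∈ G.Bf u, ∀ x ∈ UnderT G.tb G.posf G.Bf v,
      (z ≤ x → ∃ s ∈ G.Bf v, z ≤ s ∧ s ≤ x) ∧
      (x ≤ z → ∃ s ∈ G.Bf v, x ≤ s ∧ s ≤ z) := by
  obtain ⟨r, rfl⟩ := huv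
  refine G.P1list r u _ rfl ?_ hpos
  intro h
  exact hne (by simp [h])

end GoodTree

end GoodTreeSec


noncomputable section AssemblySec
open scoped Classical

variable {X : Type} [PartialOrder X] [Fintype X] {t : ℕ}

namespace GoodTree

variable (G : GoodTree X t)

/-- The profile of `x` relative to the boundary set at `p`. -/
def prof (p : List Bool) (x : X) : Finset X × Finset X :=
  ((G.Bf p).filter (fun z => z ≤ x), (G.Bf p).filter (fun z => x ≤ z))

/-- All pairs of subsets of the boundary set at `p`. -/
def PairT (p : List Bool) : Finset (Finset X × Finset X) :=
  (G.Bf p).powerset ×ˢ (G.Bf p).powerset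

lemma card_PairT (p : List Bool) : Fintype.card ↥(G.PairT p) ≤ 4 ^ t := by
  rw [Fintype.card_coe]
  unfold PairT
  rw [Finset.card_product, Finset.card_powerset, ← pow_add]
  calc 2 ^ ((G.Bf p).card + (G.Bf p).card) = 4 ^ (G.Bf p).card := by
        rw [show (4:ℕ) = 2^2 by norm_num, ← pow_mul, two_mul]
    _ ≤ 4 ^ t := Nat.pow_le_pow_right (by norm_num) (G.Bcard p)

instance (p : List Bool) : Nonempty ↥(G.PairT p) :=
  ⟨⟨(∅, ∅), by simp [PairT, Finset.mem_product]⟩⟩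

/-- Injection of the pairs of subsets into the labels. -/
def emb (p : List Bool) : ↥(G.PairT p) ↪ Fin (4 ^ t) :=
  Classical.choice (Function.Embedding.nonempty_of_card_le
    (by simpa using G.card_PairT p))

def code (p : List Bool) (q : Finset X × Finset X) : Fin (4 ^ t) :=
  G.emb p ⟨(q.1 ∩ G.Bf p, q.2 ∩ G.Bf p), by
    simp [PairT, Finset.mem_product]⟩

def decode (p : List Bool) (γ : Fin (4 ^ t)) : Finset X × Finset X :=
  (Function.invFun (G.emb p) γ : ↥(G.PairT p)).val

lemma decode_sub (p : List Bool) (γ : Fin (4 ^ t)) :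
    (G.decode p γ).1 ⊆ G.Bf p ∧ (G.decode p γ).2 ⊆ G.Bf p := by
  have h := (Function.invFun (G.emb p) γ : ↥(G.PairT p)).2
  simp only [PairT, Finset.mem_product, Finset.mem_powerset] at h
  exact h

lemma decode_code (p : List Bool) {q : Finset X × Finset X}
    (h1 : q.1 ⊆ G.Bf p) (h2 : q.2 ⊆ G.Bf p) : G.decode p (G.code p q) = q := by
  unfold decode code
  rw [Function.leftInverse_invFun (G.emb p).injective]
  simp only
  rw [Finset.inter_eq_left.mpr h1, Finset.inter_eq_left.mpr h2]

/-- Translate a profile into one relative to `Bf u`. -/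
def trPair (u : List Bool) (q : Finset X × Finset X) : Finset X × Finset X :=
  ((G.Bf u).filter (fun z => ∃ s ∈ q.1, z ≤ s),
   (G.Bf u).filter (fun z => ∃ s ∈ q.2, s ≤ z))

def relF (u v : List Bool) (γ : Fin (4 ^ t)) : Fin (4 ^ t) :=
  G.code u (G.trPair u (G.decode v γ))

def initF (x : X) : Fin (4 ^ t) := G.code (G.posf x) (G.prof (G.posf x) x)

lemma prof_sub (p : List Bool) (x : X) :
    (G.prof p x).1 ⊆ G.Bf p ∧ (G.prof p x).2 ⊆ G.Bf p :=
  ⟨Finset.filter_subset _ _, Finset.filter_subset _ _⟩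

lemma tr_prof {u v : List Bool} (huv : u <+: v) (hne : u ≠ v)
    (hpos : G.tb.IsPos v) {x : X} (hx : x ∈ UnderT G.tb G.posf G.Bf v) :
    G.trPair u (G.prof v x) = G.prof u x := by
  have hP1 := G.P1 huv hne hpos
  refine Prod.ext ?_ ?_
  · ext z
    simp only [trPair, prof, Finset.mem_filter]
    constructor
    · rintro ⟨hzu, s, hs, hzs⟩
      exact ⟨hzu, hzs.trans hs.2⟩
    · rintro ⟨hzu, hzx⟩
      obtain ⟨s, hs, h1, h2⟩ := (hP1 z hzu x hx).1 hzx
      exact ⟨hzu, s, ⟨hs, h2⟩, h1⟩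
  · ext z
    simp only [trPair, prof, Finset.mem_filter]
    constructor
    · rintro ⟨hzu, s, hs, hsz⟩
      exact ⟨hzu, hs.2.trans hsz⟩
    · rintro ⟨hzu, hxz⟩
      obtain ⟨s, hs, h1, h2⟩ := (hP1 z hzu x hx).2 hxz
      exact ⟨hzu, s, ⟨hs, h1⟩, h2⟩

lemma tr_tr {u v w : List Bool} (huv : u <+: v) (hneuv : u ≠ v) (hvw : v <+: w)
    (hpos : G.tb.IsPos w) {q : Finset X × Finset X}
    (hq1 : q.1 ⊆ G.Bf w) (hq2 : q.2 ⊆ G.Bf w) :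
    G.trPair u (G.trPair v q) = G.trPair u q := by
  have hposv : G.tb.IsPos v := BTree.isPos_prefix hpos hvw
  have hP1 := G.P1 huv hneuv hposv
  refine Prod.ext ?_ ?_
  · ext z
    simp only [trPair, Finset.mem_filter]
    constructor
    · rintro ⟨hzu, s', ⟨hs'v, s, hs, hs's⟩, hzs'⟩
      exact ⟨hzu, s, hs, hzs'.trans hs's⟩
    · rintro ⟨hzu, s, hs, hzs⟩
      have hsU : s ∈ UnderT G.tb G.posf G.Bf v := Or.inr ⟨w, hpos, hvw, hq1 hs⟩
      obtain ⟨s₁, hs₁, h1, h2⟩ := (hP1 z hzu s hsU).1 hzs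
      exact ⟨hzu, s₁, ⟨hs₁, s, hs, h2⟩, h1⟩
  · ext z
    simp only [trPair, Finset.mem_filter]
    constructor
    · rintro ⟨hzu, s', ⟨hs'v, s, hs, hss'⟩, hs'z⟩
      exact ⟨hzu, s, hs, hss'.trans hs'z⟩
    · rintro ⟨hzu, s, hs, hsz⟩
      have hsU : s ∈ UnderT G.tb G.posf G.Bf v := Or.inr ⟨w, hpos, hvw, hq2 hs⟩
      obtain ⟨s₁, hs₁, h1, h2⟩ := (hP1 z hzu s hsU).2 hsz
      exact ⟨hzu, s₁, ⟨hs₁, s, hs, h1⟩, h2⟩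

lemma label {u : List Bool} {x : X} (huv : u <+: G.posf x) (hne : u ≠ G.posf x) :
    G.relF u (G.posf x) (G.initF x) = G.code u (G.prof u x) := by
  unfold relF initF
  rw [G.decode_code _ (G.prof_sub _ x).1 (G.prof_sub _ x).2,
    G.tr_prof huv hne (BTree.isPos_of_subtree_eq (G.pos_spec x))
      (Or.inl (List.prefix_rfl))]

/-- The NLC-decomposition associated with a good tree. -/
def toNLC : NLCDecomp X (Fin (4 ^ t)) where
  tree := G.tb
  pos := G.posf
  pos_spec := G.pos_spec
  leaves_eq := G.leaves_eq
  init := G.initF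
  rel := G.relF
  rel_comp := by
    intro u v w hpos huv hneuv hvw hnevw γ
    unfold relF
    rw [G.decode_code _ (Finset.filter_subset _ _) (Finset.filter_subset _ _)]
    rw [G.tr_tr huv hneuv hvw hpos (G.decode_sub w γ).1 (G.decode_sub w γ).2]
  R := fun u => {q | ∃ z, z ∈ (G.decode u q.1).2 ∧ z ∈ (G.decode u q.2).1}
  R' := fun u => {q | ∃ z, z ∈ (G.decode u q.1).2 ∧ z ∈ (G.decode u q.2).1}
  encode := by
    intro x y hxy hx hy
    set u := lcp (G.posf x) (G.posf y) with hu
    have hux : u <+: G.posf x := List.prefix_of_snoc_prefix hx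
    have hnex : u ≠ G.posf x := List.ne_of_snoc_prefix hx
    have huy : u <+: G.posf y := List.prefix_of_snoc_prefix hy
    have hney : u ≠ G.posf y := List.ne_of_snoc_prefix hy
    have hlabx := G.label hux hnex
    have hlaby := G.label huy hney
    have hdx := G.decode_code u (G.prof_sub u x).1 (G.prof_sub u x).2
    have hdy := G.decode_code u (G.prof_sub u y).1 (G.prof_sub u y).2
    have hsplit := G.split u x y hx hy
    constructor
    · rw [hsplit.1, hlabx, hlaby]
      constructor
      · rintro ⟨z, hz, h1, h2⟩
        refine ⟨z, ?_, ?_⟩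
        · rw [hdx]; exact Finset.mem_filter.mpr ⟨hz, h1⟩
        · rw [hdy]; exact Finset.mem_filter.mpr ⟨hz, h2⟩
      · rintro ⟨z, h1, h2⟩
        rw [hdx] at h1
        rw [hdy] at h2
        simp only [prof, Finset.mem_filter] at h1 h2
        exact ⟨z, h1.1, h1.2, h2.2⟩
    · rw [hsplit.2, hlabx, hlaby]
      constructor
      · rintro ⟨z, hz, h1, h2⟩
        refine ⟨z, ?_, ?_⟩
        · rw [hdy]; exact Finset.mem_filter.mpr ⟨hz, h1⟩
        · rw [hdx]; exact Finset.mem_filter.mpr ⟨hz, h2⟩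
      · rintro ⟨z, h1, h2⟩
        rw [hdy] at h1
        rw [hdx] at h2
        simp only [prof, Finset.mem_filter] at h1 h2
        exact ⟨z, h1.1, h1.2, h2.2⟩

theorem nlcWidth (G : GoodTree X t) : nlcWidthLE X (4 ^ t) :=
  ⟨4 ^ t, le_rfl, ⟨G.toNLC⟩⟩

end GoodTree
end AssemblySec


noncomputable section BuildSec
open scoped Classical
open NLCAux NLCAux2 SimpleGraph

variable {X : Type} [PartialOrder X] [Fintype X] {ν : Type}
variable (td : TreeDecomp (coverGraphOf ((· ≤ ·) : X → X → Prop)) ν)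

/-- Bags as finsets. -/
def bagF (β : ν) : Finset X := (td.bag β).toFinset

lemma mem_bagF {β : ν} {x : X} : x ∈ bagF td β ↔ x ∈ td.bag β := Set.mem_toFinset

/-- `UnderP` : everything visible below `v`, relativized to the leaf set `W`. -/
def UnderP (W : Finset X) (tb : BTree X) (posf : X → List Bool)
    (Bf : List Bool → Finset X) (v : List Bool) : Set X :=
  {x | x ∈ W ∧ v <+: posf x} ∪ {x | ∃ w, tb.IsPos w ∧ v <+: w ∧ x ∈ Bf w}

/-- Partial analogue of `GoodTree` on a leaf set `W`. -/
structure PieceCore (W : Finset X) where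
  tb : BTree X
  posf : X → List Bool
  pos_spec : ∀ x ∈ W, tb.subtreeAt (posf x) = some (BTree.leaf x)
  leaves_eq : tb.leaves = W.val
  Bf : List Bool → Finset X
  Bbag : ∀ p, ∃ β, Bf p = bagF td β
  step : ∀ u b, tb.IsPos (u ++ [b]) → ∀ z ∈ Bf u, ∀ x ∈ UnderP W tb posf Bf (u ++ [b]),
      (z ≤ x → ∃ s ∈ Bf (u ++ [b]), z ≤ s ∧ s ≤ x) ∧
      (x ≤ z → ∃ s ∈ Bf (u ++ [b]), x ≤ s ∧ s ≤ z)
  split : ∀ u x y, x ∈ W → y ∈ W → (u ++ [false]) <+: posf x → (u ++ [true]) <+: posf y →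
      ((x ≤ y ↔ ∃ z ∈ Bf u, x ≤ z ∧ z ≤ y) ∧ (y ≤ x ↔ ∃ z ∈ Bf u, y ≤ z ∧ z ≤ x))

/-- All elements mentioned by a piece. -/
def UAset {W : Finset X} (P : PieceCore td W) : Set X :=
  ↑W ∪ {x | ∃ p, P.tb.IsPos p ∧ x ∈ P.Bf p}

lemma underP_nil {W : Finset X} (P : PieceCore td W) :
    UnderP W P.tb P.posf P.Bf [] = UAset td P := by
  unfold UnderP UAset
  ext x
  constructor
  · rintro (⟨h1, -⟩ | ⟨w, h1, -, h3⟩)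
    · exact Or.inl h1
    · exact Or.inr ⟨w, h1, h3⟩
  · rintro (h1 | ⟨w, h1, h3⟩)
    · exact Or.inl ⟨h1, List.nil_prefix⟩
    · exact Or.inr ⟨w, h1, List.nil_prefix, h3⟩

/-- A piece together with the region-level data it exposes to its region `c`. -/
structure RegSide (c : ν) (N : Set ν) (W : Finset X) where
  core : PieceCore td W
  D : Finset ν
  hadj : ∀ d ∈ D, td.tree.Adj c d
  hDsub : ∀ d ∈ D, SideR td.tree c d ⊆ N
  leafTag : ∀ x ∈ W, x ∈ bagF td c ∨ ∃ d ∈ D, Conf td (SideR td.tree c d) x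
  UAtag : ∀ x ∈ UAset td core, x ∈ bagF td c ∨ ∃ d ∈ D, Conf td (SideR td.tree c d) x
  rootCross : ∀ z ∈ bagF td c, ∀ x ∈ UAset td core,
      (z ≤ x → ∃ s ∈ core.Bf [], z ≤ s ∧ s ≤ x) ∧
      (x ≤ z → ∃ s ∈ core.Bf [], x ≤ s ∧ s ≤ z)

/-- The single-leaf piece for an element of the region bag. -/
def leafSide (c : ν) (N : Set ν) {x : X} (hx : x ∈ bagF td c) :
    RegSide td c N {x} where
  core :=
    { tb := BTree.leaf x
      posf := fun _ => []
      pos_spec := by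
        intro y hy
        rw [Finset.mem_singleton] at hy
        subst hy
        rfl
      leaves_eq := by simp [BTree.leaves]
      Bf := fun _ => bagF td c
      Bbag := fun _ => ⟨c, rfl⟩
      step := by
        intro u b hpos
        exfalso
        have : (BTree.leaf x).subtreeAt (u ++ [b]) = none := by
          cases u <;> rfl
        rw [BTree.IsPos, this] at hpos
        simp at hpos
      split := by
        intro u a b ha hb hpa hpb
        exfalso
        have := hpa.length_le
        simp at this }
  D := ∅
  hadj := by simp
  hDsub := by simp
  leafTag := by
    intro y hy
    rw [Finset.mem_singleton] at hy
    subst hy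
    exact Or.inl hx
  UAtag := by
    rintro y (hy | ⟨p, -, hy⟩)
    · rw [Finset.mem_coe, Finset.mem_singleton] at hy
      subst hy
      exact Or.inl hx
    · exact Or.inl hy
  rootCross := by
    intro z hz y hy
    constructor
    · intro h
      exact ⟨z, hz, le_rfl, h⟩
    · intro h
      exact ⟨z, hz, h, le_rfl⟩
end BuildSec


noncomputable section BuildSec2
open scoped Classical
open NLCAux NLCAux2 SimpleGraph

variable {X : Type} [PartialOrder X] [Fintype X] {ν : Type}
variable (td : TreeDecomp (coverGraphOf ((· ≤ ·) : X → X → Prop)) ν)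

lemma btree_subtreeAt_nil (t : BTree X) : t.subtreeAt [] = some t := by
  cases t <;> rfl

lemma btree_isPos_nil (t : BTree X) : t.IsPos [] := by
  rw [BTree.IsPos, btree_subtreeAt_nil]; rfl

lemma btree_subtreeAt_cons (l r : BTree X) (b : Bool) (p : List Bool) :
    (BTree.node l r).subtreeAt (b :: p) = (if b then r else l).subtreeAt p := by
  cases b <;> rfl

lemma btree_isPos_cons {l r : BTree X} {b : Bool} {p : List Bool} :
    (BTree.node l r).IsPos (b :: p) ↔ (if b then r else l).IsPos p := by
  rw [BTree.IsPos, BTree.IsPos, btree_subtreeAt_cons]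

/-- Conversion of a recursively built piece into a region-side for the parent region. -/
def itemize (hT : td.tree.IsTree) {c d : ν} (hcd : td.tree.Adj c d)
    {N : Set ν} (hsub : SideR td.tree c d ⊆ N)
    {Wd : Finset X} (P : PieceCore td Wd)
    (hconfW : ∀ x ∈ Wd, Conf td (SideR td.tree c d) x)
    (p' r' : ν) (hadj' : td.tree.Adj p' r') (hroot : P.Bf [] = bagF td r')
    (hsub' : SideR td.tree p' r' ⊆ SideR td.tree c d)
    (hconf : ∀ x ∈ UAset td P, x ∈ P.Bf [] ∨ Conf td (SideR td.tree p' r') x) :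
    RegSide td c N Wd where
  core := P
  D := {d}
  hadj := by
    intro e he
    rw [Finset.mem_singleton] at he
    subst he; exact hcd
  hDsub := by
    intro e he
    rw [Finset.mem_singleton] at he
    subst he; exact hsub
  leafTag := fun x hx => Or.inr ⟨d, Finset.mem_singleton_self d, hconfW x hx⟩
  UAtag := by
    intro x hx
    rcases hconf x hx with h | h
    · -- x ∈ P.Bf [] = bagF r' ⊆ ... : x has a bag inside the side
      rw [hroot, mem_bagF] at h
      by_cases hc : Conf td (SideR td.tree c d) x
      · exact Or.inr ⟨d, Finset.mem_singleton_self d, hc⟩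
      · left
        rw [Conf] at hc
        push_neg at hc
        obtain ⟨β, hβ1, hβ2⟩ := hc
        have hr'in : r' ∈ SideR td.tree c d := hsub' (self_mem_sideR td.tree p' r')
        rw [mem_bagF]
        exact (bag_cross' td hT hcd hβ1 h hβ2 hr'in).1
    · exact Or.inr ⟨d, Finset.mem_singleton_self d,
        fun β hβ => hsub' (h β hβ)⟩
  rootCross := by
    intro z hz x hx
    have hcout : c ∉ SideR td.tree p' r' := fun hc =>
      not_mem_sideR_self hT hcd (hsub' hc)
    rcases hconf x hx with h | h
    · exact ⟨fun hzx => ⟨x, h, hzx, le_rfl⟩, fun hxz => ⟨x, h, le_rfl, hxz⟩⟩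
    · constructor
      · intro hzx
        obtain ⟨s, hs1, hs2, hs3, hs4⟩ := lemSep_down td hT hadj' hzx
          ⟨c, (mem_bagF td).mp hz, hcout⟩ h
        exact ⟨s, by rw [hroot, mem_bagF]; exact hs2, hs3, hs4⟩
      · intro hxz
        obtain ⟨s, hs1, hs2, hs3, hs4⟩ := lemSep_up td hT hadj' hxz
          ⟨c, (mem_bagF td).mp hz, hcout⟩ h
        exact ⟨s, by rw [hroot, mem_bagF]; exact hs2, hs3, hs4⟩

end BuildSec2


noncomputable section BuildSec3
open scoped Classical
open NLCAux NLCAux2 SimpleGraph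

variable {X : Type} [PartialOrder X] [Fintype X] {ν : Type}
variable (td : TreeDecomp (coverGraphOf ((· ≤ ·) : X → X → Prop)) ν)

lemma bagSplit_left {c : ν} {x y : X} (hx : x ∈ bagF td c) :
    (x ≤ y ↔ ∃ z ∈ bagF td c, x ≤ z ∧ z ≤ y) ∧
    (y ≤ x ↔ ∃ z ∈ bagF td c, y ≤ z ∧ z ≤ x) :=
  ⟨⟨fun h => ⟨x, hx, le_rfl, h⟩, fun ⟨_, _, h1, h2⟩ => h1.trans h2⟩,
   ⟨fun h => ⟨x, hx, h, le_rfl⟩, fun ⟨_, _, h1, h2⟩ => h1.trans h2⟩⟩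

lemma bagSplit_right {c : ν} {x y : X} (hy : y ∈ bagF td c) :
    (x ≤ y ↔ ∃ z ∈ bagF td c, x ≤ z ∧ z ≤ y) ∧
    (y ≤ x ↔ ∃ z ∈ bagF td c, y ≤ z ∧ z ≤ x) :=
  ⟨⟨fun h => ⟨y, hy, h, le_rfl⟩, fun ⟨_, _, h1, h2⟩ => h1.trans h2⟩,
   ⟨fun h => ⟨y, hy, le_rfl, h⟩, fun ⟨_, _, h1, h2⟩ => h1.trans h2⟩⟩

lemma crossSplit (hT : td.tree.IsTree) {c d e : ν} (hcd : td.tree.Adj c d)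
    (hce : td.tree.Adj c e) (hde : d ≠ e) {x y : X}
    (hx : Conf td (SideR td.tree c d) x) (hy : Conf td (SideR td.tree c e) y) :
    (x ≤ y ↔ ∃ z ∈ bagF td c, x ≤ z ∧ z ≤ y) ∧
    (y ≤ x ↔ ∃ z ∈ bagF td c, y ≤ z ∧ z ≤ x) := by
  have hxout : ∃ β, x ∈ td.bag β ∧ β ∉ SideR td.tree c e := by
    obtain ⟨β, hβ⟩ := exists_bag td x
    exact ⟨β, hβ, fun hmem => sides_disjoint hT hcd hce hde (hx β hβ) hmem⟩
  constructor
  · constructor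
    · intro hxy
      obtain ⟨s, hs1, hs2, hs3, hs4⟩ := lemSep_down td hT hce hxy hxout hy
      exact ⟨s, (mem_bagF td).mpr hs1, hs3, hs4⟩
    · rintro ⟨z, hz, h1, h2⟩; exact h1.trans h2
  · constructor
    · intro hyx
      obtain ⟨s, hs1, hs2, hs3, hs4⟩ := lemSep_up td hT hce hyx hxout hy
      exact ⟨s, (mem_bagF td).mpr hs1, hs3, hs4⟩
    · rintro ⟨z, hz, h1, h2⟩; exact h1.trans h2

/-- The combined boundary assignment. -/
def combBf (c : ν) (BL BR : List Bool → Finset X) : List Bool → Finset X :=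
  fun p => match p with
  | [] => bagF td c
  | false :: q => BL q
  | true :: q => BR q

/-- The combined position assignment. -/
def combPos (WL : Finset X) (pL pR : X → List Bool) : X → List Bool :=
  fun x => if x ∈ WL then false :: pL x else true :: pR x

lemma underP_comb (c : ν) {WL WR : Finset X} (hW : Disjoint WL WR)
    (tL tR : BTree X) (pL pR : X → List Bool) (BL BR : List Bool → Finset X)
    (b : Bool) (v : List Bool) :
    UnderP (WL.disjUnion WR hW) (BTree.node tL tR)
      (combPos WL pL pR) (combBf td c BL BR) (b :: v) =
    UnderP (if b then WR else WL) (if b then tR else tL)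
      (fun x => if b then pR x else pL x) (fun q => if b then BR q else BL q) v := by
  ext x
  constructor
  · rintro (⟨hxW, hpre⟩ | ⟨w, hwpos, hwpre, hxB⟩)
    · left
      rw [Finset.mem_disjUnion] at hxW
      unfold combPos at hpre
      by_cases hxL : x ∈ WL
      · rw [if_pos hxL] at hpre
        rw [List.cons_prefix_cons] at hpre
        cases b
        · exact ⟨hxL, by simpa using hpre.2⟩
        · exact absurd hpre.1.symm (by simp)
      · rw [if_neg hxL] at hpre
        rw [List.cons_prefix_cons] at hpre
        cases b
        · exact absurd hpre.1 (by simp)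
        · refine ⟨?_, by simpa using hpre.2⟩
          rcases hxW with h | h
          · exact absurd h hxL
          · simpa using h
    · right
      cases w with
      | nil =>
        exfalso
        have := hwpre.length_le
        simp at this
      | cons b' w' =>
        rw [List.cons_prefix_cons] at hwpre
        obtain ⟨rfl, hpre'⟩ := hwpre
        rw [btree_isPos_cons] at hwpos
        refine ⟨w', ?_, hpre', ?_⟩
        · cases b <;> simpa using hwpos
        · cases b
          · exact hxB
          · exact hxB
  · rintro (⟨hxW, hpre⟩ | ⟨w, hwpos, hwpre, hxB⟩)
    · left
      cases b
      · have hxL : x ∈ WL := by simpa using hxW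
        refine ⟨Finset.mem_disjUnion.mpr (Or.inl hxL), ?_⟩
        unfold combPos
        rw [if_pos hxL, List.cons_prefix_cons]
        exact ⟨rfl, by simpa using hpre⟩
      · have hxR : x ∈ WR := by simpa using hxW
        have hxL : x ∉ WL := fun h => (Finset.disjoint_left.mp hW h) hxR
        refine ⟨Finset.mem_disjUnion.mpr (Or.inr hxR), ?_⟩
        unfold combPos
        rw [if_neg hxL, List.cons_prefix_cons]
        exact ⟨rfl, by simpa using hpre⟩
    · right
      refine ⟨b :: w, ?_, ?_, ?_⟩
      · rw [btree_isPos_cons]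
        cases b <;> simpa using hwpos
      · rw [List.cons_prefix_cons]
        exact ⟨rfl, hwpre⟩
      · cases b
        · exact hxB
        · exact hxB

lemma underP_comb_false (c : ν) {WL WR : Finset X} (hW : Disjoint WL WR)
    (tL tR : BTree X) (pL pR : X → List Bool) (BL BR : List Bool → Finset X)
    (v : List Bool) :
    UnderP (WL.disjUnion WR hW) (BTree.node tL tR)
      (combPos WL pL pR) (combBf td c BL BR) (false :: v) = UnderP WL tL pL BL v := by
  rw [underP_comb]
  simp

lemma underP_comb_true (c : ν) {WL WR : Finset X} (hW : Disjoint WL WR)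
    (tL tR : BTree X) (pL pR : X → List Bool) (BL BR : List Bool → Finset X)
    (v : List Bool) :
    UnderP (WL.disjUnion WR hW) (BTree.node tL tR)
      (combPos WL pL pR) (combBf td c BL BR) (true :: v) = UnderP WR tR pR BR v := by
  rw [underP_comb]
  simp

lemma btree_isPos_cons_false {l r : BTree X} {p : List Bool} :
    (BTree.node l r).IsPos (false :: p) ↔ l.IsPos p := by
  rw [btree_isPos_cons]
  simp

lemma btree_isPos_cons_true {l r : BTree X} {p : List Bool} :
    (BTree.node l r).IsPos (true :: p) ↔ r.IsPos p := by
  rw [btree_isPos_cons]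
  simp

end BuildSec3


noncomputable section BuildSec4
open scoped Classical
open NLCAux NLCAux2 SimpleGraph

variable {X : Type} [PartialOrder X] [Fintype X] {ν : Type}
variable (td : TreeDecomp (coverGraphOf ((· ≤ ·) : X → X → Prop)) ν)

/-- Combination step: a new region node combining a left piece and the rest. -/
def combStep (hT : td.tree.IsTree) {c : ν} {N : Set ν} {WL WR : Finset X}
    (L : RegSide td c N WL) (R : RegSide td c N WR)
    (hW : Disjoint WL WR) (hD : Disjoint L.D R.D) :
    { S : RegSide td c N (WL.disjUnion WR hW) //
      S.core.Bf [] = bagF td c ∧ S.D = L.D ∪ R.D } := by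
  have hposL : ∀ x ∈ WL, combPos WL L.core.posf R.core.posf x = false :: L.core.posf x := by
    intro x hx
    unfold combPos
    rw [if_pos hx]
  have hposR : ∀ x ∈ WR, combPos WL L.core.posf R.core.posf x = true :: R.core.posf x := by
    intro x hx
    unfold combPos
    rw [if_neg (fun h => (Finset.disjoint_left.mp hW h) hx)]
  have hmemL : ∀ x : X, ∀ u : List Bool,
      (false :: u) <+: combPos WL L.core.posf R.core.posf x →
      x ∈ WL ∧ u <+: L.core.posf x := by
    intro x u hpre
    unfold combPos at hpre
    by_cases hx : x ∈ WL
    · rw [if_pos hx, List.cons_prefix_cons] at hpre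
      exact ⟨hx, hpre.2⟩
    · rw [if_neg hx, List.cons_prefix_cons] at hpre
      exact absurd hpre.1.symm (by simp)
  have hmemR : ∀ x : X, ∀ u : List Bool,
      (true :: u) <+: combPos WL L.core.posf R.core.posf x →
      x ∉ WL ∧ u <+: R.core.posf x := by
    intro x u hpre
    unfold combPos at hpre
    by_cases hx : x ∈ WL
    · rw [if_pos hx, List.cons_prefix_cons] at hpre
      exact absurd hpre.1 (by simp)
    · rw [if_neg hx, List.cons_prefix_cons] at hpre
      exact ⟨hx, hpre.2⟩
  refine ⟨{ core := ?_, D := L.D ∪ R.D, hadj := ?_, hDsub := ?_, leafTag := ?_,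
            UAtag := ?_, rootCross := ?_ }, ?_⟩
  · refine { tb := BTree.node L.core.tb R.core.tb,
             posf := combPos WL L.core.posf R.core.posf,
             Bf := combBf td c L.core.Bf R.core.Bf,
             pos_spec := ?_, leaves_eq := ?_, Bbag := ?_, step := ?_, split := ?_ }
    · intro x hx
      rw [Finset.mem_disjUnion] at hx
      rcases hx with hx | hx
      · rw [hposL x hx, btree_subtreeAt_cons]
        simpa using L.core.pos_spec x hx
      · rw [hposR x hx, btree_subtreeAt_cons]
        simpa using R.core.pos_spec x hx
    · show L.core.tb.leaves + R.core.tb.leaves = _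
      rw [L.core.leaves_eq, R.core.leaves_eq]
      rfl
    · intro p
      match p with
      | [] => exact ⟨c, rfl⟩
      | false :: q => exact L.core.Bbag q
      | true :: q => exact R.core.Bbag q
    · intro u b hpos z hz x hx
      match u with
      | [] =>
        cases b
        · rw [show ([] : List Bool) ++ [false] = false :: [] from rfl] at hpos hx ⊢
          rw [underP_comb_false, underP_nil] at hx
          exact L.rootCross z hz x hx
        · rw [show ([] : List Bool) ++ [true] = true :: [] from rfl] at hpos hx ⊢
          rw [underP_comb_true, underP_nil] at hx
          exact R.rootCross z hz x hx
      | false :: u' =>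
        rw [show (false :: u') ++ [b] = false :: (u' ++ [b]) from rfl] at hpos hx ⊢
        rw [underP_comb_false] at hx
        rw [btree_isPos_cons_false] at hpos
        exact L.core.step u' b hpos z hz x hx
      | true :: u' =>
        rw [show (true :: u') ++ [b] = true :: (u' ++ [b]) from rfl] at hpos hx ⊢
        rw [underP_comb_true] at hx
        rw [btree_isPos_cons_true] at hpos
        exact R.core.step u' b hpos z hz x hx
    · intro u x y hxW hyW hpx hpy
      match u with
      | [] =>
        rw [List.nil_append] at hpx hpy
        obtain ⟨hxL, -⟩ := hmemL x [] hpx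
        obtain ⟨hyL, -⟩ := hmemR y [] hpy
        have hyR : y ∈ WR := by
          rw [Finset.mem_disjUnion] at hyW
          exact hyW.resolve_left hyL
        show _ ∧ _
        rcases L.leafTag x hxL with htx | ⟨d, hd, hconfx⟩
        · exact bagSplit_left td htx
        · rcases R.leafTag y hyR with hty | ⟨e, he, hconfy⟩
          · exact bagSplit_right td hty
          · refine crossSplit td hT (L.hadj d hd) (R.hadj e he) ?_ hconfx hconfy
            intro hde
            subst hde
            exact (Finset.disjoint_left.mp hD hd) he
      | false :: u' =>
        rw [show (false :: u') ++ [false] = false :: (u' ++ [false]) from rfl] at hpx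
        rw [show (false :: u') ++ [true] = false :: (u' ++ [true]) from rfl] at hpy
        obtain ⟨hxL, hpx'⟩ := hmemL x _ hpx
        obtain ⟨hyL, hpy'⟩ := hmemL y _ hpy
        exact L.core.split u' x y hxL hyL hpx' hpy'
      | true :: u' =>
        rw [show (true :: u') ++ [false] = true :: (u' ++ [false]) from rfl] at hpx
        rw [show (true :: u') ++ [true] = true :: (u' ++ [true]) from rfl] at hpy
        obtain ⟨hxL, hpx'⟩ := hmemR x _ hpx
        obtain ⟨hyL, hpy'⟩ := hmemR y _ hpy
        have hxR : x ∈ WR := by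
          rw [Finset.mem_disjUnion] at hxW
          exact hxW.resolve_left hxL
        have hyR : y ∈ WR := by
          rw [Finset.mem_disjUnion] at hyW
          exact hyW.resolve_left hyL
        exact R.core.split u' x y hxR hyR hpx' hpy'
  · intro d hd
    rw [Finset.mem_union] at hd
    rcases hd with hd | hd
    · exact L.hadj d hd
    · exact R.hadj d hd
  · intro d hd
    rw [Finset.mem_union] at hd
    rcases hd with hd | hd
    · exact L.hDsub d hd
    · exact R.hDsub d hd
  · intro x hx
    rw [Finset.mem_disjUnion] at hx
    rcases hx with hx | hx
    · rcases L.leafTag x hx with h | ⟨d, hd, hc⟩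
      · exact Or.inl h
      · exact Or.inr ⟨d, Finset.mem_union_left _ hd, hc⟩
    · rcases R.leafTag x hx with h | ⟨d, hd, hc⟩
      · exact Or.inl h
      · exact Or.inr ⟨d, Finset.mem_union_right _ hd, hc⟩
  · rintro x (hx | ⟨p, hpos, hxB⟩)
    · rw [Finset.mem_coe, Finset.mem_disjUnion] at hx
      rcases hx with hx | hx
      · rcases L.UAtag x (Or.inl hx) with h | ⟨d, hd, hc⟩
        · exact Or.inl h
        · exact Or.inr ⟨d, Finset.mem_union_left _ hd, hc⟩
      · rcases R.UAtag x (Or.inl hx) with h | ⟨d, hd, hc⟩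
        · exact Or.inl h
        · exact Or.inr ⟨d, Finset.mem_union_right _ hd, hc⟩
    · match p with
      | [] => exact Or.inl hxB
      | false :: q =>
        rw [btree_isPos_cons_false] at hpos
        rcases L.UAtag x (Or.inr ⟨q, hpos, hxB⟩) with h | ⟨d, hd, hc⟩
        · exact Or.inl h
        · exact Or.inr ⟨d, Finset.mem_union_left _ hd, hc⟩
      | true :: q =>
        rw [btree_isPos_cons_true] at hpos
        rcases R.UAtag x (Or.inr ⟨q, hpos, hxB⟩) with h | ⟨d, hd, hc⟩
        · exact Or.inl h
        · exact Or.inr ⟨d, Finset.mem_union_right _ hd, hc⟩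
  · intro z hz x hx
    exact ⟨fun h => ⟨z, hz, le_rfl, h⟩, fun h => ⟨z, hz, h, le_rfl⟩⟩
  · exact ⟨rfl, rfl⟩

end BuildSec4


noncomputable section BuildSec5
open scoped Classical
open NLCAux NLCAux2 SimpleGraph

variable {X : Type} [PartialOrder X] [Fintype X] {ν : Type}
variable (td : TreeDecomp (coverGraphOf ((· ≤ ·) : X → X → Prop)) ν)

/-- Transport a region side across an equality of leaf sets. -/
def RegSide.castW {c : ν} {N : Set ν} {W W' : Finset X} (h : W = W')
    (S : RegSide td c N W) : RegSide td c N W' := h ▸ S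

lemma RegSide.castW_Bf {c : ν} {N : Set ν} {W W' : Finset X} (h : W = W')
    (S : RegSide td c N W) : (RegSide.castW td h S).core.Bf = S.core.Bf := by
  subst h; rfl

lemma RegSide.castW_D {c : ν} {N : Set ν} {W W' : Finset X} (h : W = W')
    (S : RegSide td c N W) : (RegSide.castW td h S).D = S.D := by
  subst h; rfl

/-- A canonical node whose bag contains `x`. -/
def node0 (x : X) : ν := (exists_bag td x).choose

lemma node0_spec (x : X) : x ∈ td.bag (node0 td x) := (exists_bag td x).choose_spec

/-- Combining the pieces attached to the various directions. -/
lemma pieceFold (hT : td.tree.IsTree) {c : ν} {N : Set ν} (dirs : Finset ν)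
    (Wof : ν → Finset X)
    (hitem : ∀ d ∈ dirs, ∃ S : RegSide td c N (Wof d), S.D = {d})
    (hdisj : ∀ d d', d ≠ d' → Disjoint (Wof d) (Wof d')) :
    ∀ ds : Finset ν, ds ⊆ dirs → ds.Nonempty →
      ∃ S : RegSide td c N (ds.biUnion Wof),
        S.D ⊆ ds ∧ (2 ≤ ds.card → S.core.Bf [] = bagF td c) := by
  intro ds
  induction ds using Finset.induction_on with
  | empty =>
    intro _ hne
    exact absurd rfl hne.ne_empty
  | @insert d ds hd ih =>
    intro hsub hne
    obtain ⟨S₁, hS₁D⟩ := hitem d (hsub (Finset.mem_insert_self d ds))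
    by_cases hds : ds.Nonempty
    · obtain ⟨S₂, hS₂D, hS₂root⟩ := ih (fun e he => hsub (Finset.mem_insert_of_mem he)) hds
      have hWdisj : Disjoint (Wof d) (ds.biUnion Wof) := by
        rw [Finset.disjoint_biUnion_right]
        intro e he
        exact hdisj d e (fun hh => hd (hh ▸ he))
      have hDdisj : Disjoint S₁.D S₂.D := by
        rw [hS₁D]
        rw [Finset.disjoint_singleton_left]
        intro hmem
        exact hd (hS₂D hmem)
      obtain ⟨S, hSroot, hSD⟩ := combStep td hT S₁ S₂ hWdisj hDdisj
      have hWeq : (Wof d).disjUnion (ds.biUnion Wof) hWdisj = (insert d ds).biUnion Wof := by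
        rw [Finset.disjUnion_eq_union, Finset.biUnion_insert]
      refine ⟨RegSide.castW td hWeq S, ?_, ?_⟩
      · rw [RegSide.castW_D, hSD]
        intro e he
        rw [Finset.mem_union] at he
        rcases he with he | he
        · rw [hS₁D, Finset.mem_singleton] at he
          exact he ▸ Finset.mem_insert_self d ds
        · exact Finset.mem_insert_of_mem (hS₂D he)
      · intro _
        rw [RegSide.castW_Bf]
        exact hSroot
    · rw [Finset.not_nonempty_iff_eq_empty] at hds
      subst hds
      have hWeq : Wof d = (insert d (∅ : Finset ν)).biUnion Wof := by
        rw [Finset.biUnion_insert, Finset.biUnion_empty, Finset.union_empty]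
      refine ⟨RegSide.castW td hWeq S₁, ?_, ?_⟩
      · rw [RegSide.castW_D, hS₁D]
        intro e he
        rw [Finset.mem_singleton] at he
        subst he
        exact Finset.mem_insert_self e _
      · intro hcard
        simp at hcard

/-- Attaching the leaves of the region bag on top of a base piece. -/
lemma leafFold (hT : td.tree.IsTree) {c : ν} {N : Set ν} :
    ∀ (J : Finset X), (∀ x ∈ J, x ∈ bagF td c) →
    ∀ (W₀ : Finset X) (S₀ : RegSide td c N W₀), Disjoint J W₀ →
      ∃ S : RegSide td c N (J ∪ W₀),
        (J.Nonempty → S.core.Bf [] = bagF td c) ∧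
        (J = ∅ → S.core.Bf [] = S₀.core.Bf []) := by
  intro J
  induction J using Finset.induction_on with
  | empty =>
    intro _ W₀ S₀ _
    have hWeq : W₀ = ∅ ∪ W₀ := by rw [Finset.empty_union]
    refine ⟨RegSide.castW td hWeq S₀, ?_, ?_⟩
    · intro hne
      exact absurd rfl hne.ne_empty
    · intro _
      rw [RegSide.castW_Bf]
  | @insert x J hxJ ih =>
    intro hbag W₀ S₀ hdisj
    have hxbag : x ∈ bagF td c := hbag x (Finset.mem_insert_self x J)
    obtain ⟨S₂, hS₂1, hS₂2⟩ := ih (fun y hy => hbag y (Finset.mem_insert_of_mem hy)) W₀ S₀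
      (hdisj.mono_left (Finset.subset_insert x J))
    have hWdisj : Disjoint {x} (J ∪ W₀) := by
      rw [Finset.disjoint_singleton_left, Finset.mem_union]
      rintro (h | h)
      · exact hxJ h
      · exact (Finset.disjoint_left.mp hdisj (Finset.mem_insert_self x J)) h
    have hDdisj : Disjoint (leafSide td c N hxbag).D S₂.D := by
      show Disjoint ∅ _
      exact Finset.disjoint_empty_left _
    obtain ⟨S, hSroot, -⟩ := combStep td hT (leafSide td c N hxbag) S₂ hWdisj hDdisj
    have hWeq : Finset.disjUnion {x} (J ∪ W₀) hWdisj = insert x J ∪ W₀ := by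
      rw [Finset.disjUnion_eq_union]
      ext y
      simp [Finset.mem_insert, Finset.mem_union, or_assoc]
    refine ⟨RegSide.castW td hWeq S, ?_, ?_⟩
    · intro _
      rw [RegSide.castW_Bf]
      exact hSroot
    · intro h
      exact absurd h (Finset.insert_ne_empty x J)

end BuildSec5


noncomputable section BuildSec6
open scoped Classical
open NLCAux NLCAux2 SimpleGraph

variable {X : Type} [PartialOrder X] [Fintype X] {ν : Type}
variable (td : TreeDecomp (coverGraphOf ((· ≤ ·) : X → X → Prop)) ν)

/-- The main recursive construction of a piece of the layout. -/
lemma buildPiece (hT : td.tree.IsTree) :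
    ∀ (k : ℕ), ∀ (dd : ℕ), ∀ (W : Finset X) (c : ν) (N : Set ν) (hne : W.Nonempty),
      W.card ≤ k →
      td.tree.dist c (node0 td hne.choose) ≤ dd →
      (∀ x ∈ W, x ∈ bagF td c ∨ Conf td N x) →
      (N = Set.univ ∨ ∃ p, td.tree.Adj p c ∧ N = SideR td.tree p c) →
      ∃ P : PieceCore td W,
        ∀ p, td.tree.Adj p c → N = SideR td.tree p c →
          ∃ p' r', td.tree.Adj p' r' ∧ P.Bf [] = bagF td r' ∧
            SideR td.tree p' r' ⊆ N ∧
            ∀ x ∈ UAset td P, x ∈ P.Bf [] ∨ Conf td (SideR td.tree p' r') x := by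
  intro k
  induction k with
  | zero =>
    intro dd W c N hne hcard
    exfalso
    rw [Nat.le_zero, Finset.card_eq_zero] at hcard
    exact hne.ne_empty hcard
  | succ k ihk =>
    intro dd
    induction dd using Nat.strong_induction_on with
    | _ dd ihd =>
    intro W c N hne hcard hdist HW HN
    set x₀ := hne.choose with hx₀def
    have hx₀ : x₀ ∈ W := hne.choose_spec
    set I := W ∩ bagF td c with hIdef
    set Rs := W \ bagF td c with hRsdef
    have hRsW : Rs ⊆ W := Finset.sdiff_subset
    have hIW : I ⊆ W := Finset.inter_subset_left
    -- direction assignment for elements off the bag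
    have hdirex : ∀ x ∈ Rs, ∃ d, td.tree.Adj c d ∧ Conf td (SideR td.tree c d) x := by
      intro x hx
      have hxbag : x ∉ bagF td c := (Finset.mem_sdiff.mp hx).2
      obtain ⟨β₀, hβ₀⟩ := exists_bag td x
      have hβ₀ne : β₀ ≠ c := fun h => hxbag ((mem_bagF td).mpr (h ▸ hβ₀))
      obtain ⟨d, hd1, hd2⟩ := exists_side hT hβ₀ne
      refine ⟨d, hd1, fun β hβ => ?_⟩
      exact bag_same_side td (fun hc => hxbag ((mem_bagF td).mpr hc)) hβ₀ hd2 hβ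
    set dir : X → ν := fun x =>
      if h : ∃ d, td.tree.Adj c d ∧ Conf td (SideR td.tree c d) x then h.choose else c
      with hdirdef
    have hdir : ∀ x ∈ Rs, td.tree.Adj c (dir x) ∧ Conf td (SideR td.tree c (dir x)) x := by
      intro x hx
      have h := hdirex x hx
      simp only [hdirdef, dif_pos h]
      exact h.choose_spec
    set dirs := Rs.image dir with hdirsdef
    have hsubN : ∀ d ∈ dirs, SideR td.tree c d ⊆ N := by
      intro d hd
      obtain ⟨x, hxRs, rfl⟩ := Finset.mem_image.mp hd
      rcases HN with rfl | ⟨p, hadjp, rfl⟩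
      · exact Set.subset_univ _
      · have hxnb : x ∉ bagF td c := (Finset.mem_sdiff.mp hxRs).2
        have hconfN : Conf td (SideR td.tree p c) x :=
          (HW x (hRsW hxRs)).resolve_left hxnb
        have hdx := hdir x hxRs
        have hnep : dir x ≠ p := by
          intro he
          obtain ⟨β₀, hβ₀⟩ := exists_bag td x
          exact side_not_both hT hadjp (hconfN β₀ hβ₀) (by
            have := hdx.2 β₀ hβ₀
            rw [he] at this
            exact this)
        exact side_nest hT hadjp hdx.1 hnep
    have hadjdirs : ∀ d ∈ dirs, td.tree.Adj c d := by
      intro d hd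
      obtain ⟨x, hxRs, rfl⟩ := Finset.mem_image.mp hd
      exact (hdir x hxRs).1
    by_cases hcaseB : I = ∅ ∧ ∃ d₀, dirs = {d₀}
    · -- pass-through case
      obtain ⟨hIe, d₀, hd₀⟩ := hcaseB
      have hd₀dirs : d₀ ∈ dirs := by rw [hd₀]; exact Finset.mem_singleton_self d₀
      have hadj₀ : td.tree.Adj c d₀ := hadjdirs d₀ hd₀dirs
      have hWRs : W = Rs := by
        ext y
        rw [hRsdef, Finset.mem_sdiff]
        refine ⟨fun hy => ⟨hy, fun hb => ?_⟩, fun hy => hy.1⟩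
        have : y ∈ I := Finset.mem_inter.mpr ⟨hy, hb⟩
        rw [hIe] at this
        exact absurd this (Finset.notMem_empty y)
      have hallconf : ∀ x ∈ W, Conf td (SideR td.tree c d₀) x := by
        intro x hx
        have hxRs : x ∈ Rs := hWRs ▸ hx
        have hdx := hdir x hxRs
        have : dir x = d₀ := by
          have : dir x ∈ dirs := Finset.mem_image_of_mem dir hxRs
          rw [hd₀, Finset.mem_singleton] at this
          exact this
        rw [← this]
        exact hdx.2
      have hβin : node0 td x₀ ∈ SideR td.tree c d₀ :=
        hallconf x₀ hx₀ (node0 td x₀) (node0_spec td x₀)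
      have hlt : td.tree.dist d₀ (node0 td x₀) < td.tree.dist c (node0 td x₀) :=
        side_dist_lt hT hadj₀ hβin
      obtain ⟨P, hconf⟩ := ihd (td.tree.dist d₀ (node0 td x₀)) (by omega)
        W d₀ (SideR td.tree c d₀) hne hcard le_rfl
        (fun x hx => Or.inr (hallconf x hx)) (Or.inr ⟨c, hadj₀, rfl⟩)
      refine ⟨P, ?_⟩
      intro p hadjp hNeq
      obtain ⟨p', r', h1, h2, h3, h4⟩ := hconf c hadj₀ rfl
      exact ⟨p', r', h1, h2, h3.trans (hsubN d₀ hd₀dirs), h4⟩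
    · -- region case
      suffices hS : ∃ S : RegSide td c N W, S.core.Bf [] = bagF td c by
        obtain ⟨S, hroot⟩ := hS
        refine ⟨S.core, ?_⟩
        intro p hadjp hNeq
        refine ⟨p, c, hadjp, by rw [hroot], by rw [hNeq], ?_⟩
        intro x hx
        rcases S.UAtag x hx with h | ⟨d, hd, hc⟩
        · left; rw [hroot]; exact h
        · right
          intro β hβ
          have := S.hDsub d hd (hc β hβ)
          rwa [hNeq] at this
      set Wof : ν → Finset X := fun d => Rs.filter (fun x => dir x = d) with hWofdef
      have hWofRs : ∀ d, Wof d ⊆ Rs := fun d => Finset.filter_subset _ _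
      have hWofdisj : ∀ d d', d ≠ d' → Disjoint (Wof d) (Wof d') := by
        intro d d' hne'
        rw [Finset.disjoint_left]
        intro a ha ha'
        rw [hWofdef, Finset.mem_filter] at ha ha'
        exact hne' (ha.2 ▸ ha'.2 ▸ rfl)
      have hconfWof : ∀ d ∈ dirs, ∀ x ∈ Wof d, Conf td (SideR td.tree c d) x := by
        intro d hd x hx
        rw [hWofdef, Finset.mem_filter] at hx
        have := (hdir x hx.1).2
        rwa [hx.2] at this
      -- each direction yields an item
      have hitem : ∀ d ∈ dirs, ∃ S : RegSide td c N (Wof d), S.D = {d} := by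
        intro d hd
        have hadjcd : td.tree.Adj c d := hadjdirs d hd
        obtain ⟨x, hxRs, hdx⟩ := Finset.mem_image.mp hd
        have hWdne : (Wof d).Nonempty :=
          ⟨x, by rw [hWofdef, Finset.mem_filter]; exact ⟨hxRs, hdx⟩⟩
        have hWdlt : (Wof d).card ≤ k := by
          have hss : Wof d ⊂ W := by
            refine Finset.ssubset_iff_of_subset ((hWofRs d).trans hRsW) |>.mpr ?_
            by_cases hIe : I = ∅
            · -- then at least two directions
              have hdirs2 : ∃ d' ∈ dirs, d' ≠ d := by
                by_contra hno
                push_neg at hno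
                exact hcaseB ⟨hIe, d, Finset.eq_singleton_iff_unique_mem.mpr ⟨hd, hno⟩⟩
              obtain ⟨d', hd', hne'⟩ := hdirs2
              obtain ⟨y, hyRs, hdy⟩ := Finset.mem_image.mp hd'
              refine ⟨y, hRsW hyRs, ?_⟩
              rw [hWofdef, Finset.mem_filter]
              rintro ⟨-, he⟩
              exact hne' (hdy ▸ he ▸ rfl)
            · obtain ⟨y, hy⟩ := Finset.nonempty_iff_ne_empty.mpr hIe
              refine ⟨y, hIW hy, ?_⟩
              intro hmem
              have h1 := (Finset.mem_sdiff.mp (hWofRs d hmem)).2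
              exact h1 (Finset.mem_inter.mp hy).2
          have := Finset.card_lt_card hss
          omega
        obtain ⟨P, hconf⟩ := ihk (td.tree.dist d (node0 td hWdne.choose))
          (Wof d) d (SideR td.tree c d) hWdne hWdlt le_rfl
          (fun y hy => Or.inr (hconfWof d hd y hy)) (Or.inr ⟨c, hadjcd, rfl⟩)
        obtain ⟨p', r', h1, h2, h3, h4⟩ := hconf c hadjcd rfl
        exact ⟨itemize td hT hadjcd (hsubN d hd) P (hconfWof d hd) p' r' h1 h2 h3 h4, rfl⟩
      by_cases hRse : Rs = ∅
      · -- pure leaves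
        have hIWeq : I = W := by
          ext y
          rw [hIdef, Finset.mem_inter]
          refine ⟨fun hy => hy.1, fun hy => ⟨hy, ?_⟩⟩
          by_contra hb
          have : y ∈ Rs := Finset.mem_sdiff.mpr ⟨hy, hb⟩
          rw [hRse] at this
          exact absurd this (Finset.notMem_empty y)
        have hx₀I : x₀ ∈ I := hIWeq ▸ hx₀
        have hx₀bag : x₀ ∈ bagF td c := (Finset.mem_inter.mp hx₀I).2
        have hdisj0 : Disjoint (I \ {x₀}) ({x₀} : Finset X) := by
          rw [Finset.disjoint_right]
          intro a ha
          rw [Finset.mem_singleton] at ha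
          intro hmem
          rw [ha] at hmem
          exact (Finset.mem_sdiff.mp hmem).2 (Finset.mem_singleton_self x₀)
        obtain ⟨S, hS1, hS2⟩ := leafFold td hT (I \ {x₀})
          (fun y hy => (Finset.mem_inter.mp ((Finset.sdiff_subset) hy)).2)
          {x₀} (leafSide td c N hx₀bag) hdisj0
        have hWeq : I \ {x₀} ∪ {x₀} = W := by
          rw [Finset.sdiff_union_self_eq_union, ← hIWeq]
          ext y
          simp only [Finset.mem_union, Finset.mem_singleton]
          refine ⟨fun h => h.elim id (fun h => h ▸ hx₀I), fun h => Or.inl h⟩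
        refine ⟨RegSide.castW td hWeq S, ?_⟩
        rw [RegSide.castW_Bf]
        by_cases hJ : (I \ {x₀}).Nonempty
        · exact hS1 hJ
        · rw [Finset.not_nonempty_iff_eq_empty] at hJ
          rw [hS2 hJ]
          rfl
      · -- at least one direction piece
        have hdirsne : dirs.Nonempty := by
          obtain ⟨y, hy⟩ := Finset.nonempty_iff_ne_empty.mpr hRse
          exact ⟨dir y, Finset.mem_image_of_mem dir hy⟩
        obtain ⟨S₀, hS₀D, hS₀root⟩ := pieceFold td hT dirs Wof hitem hWofdisj dirs
          (le_refl _) hdirsne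
        have hbiRs : dirs.biUnion Wof = Rs := by
          ext y
          rw [Finset.mem_biUnion]
          constructor
          · rintro ⟨d, hd, hy⟩
            exact hWofRs d hy
          · intro hy
            refine ⟨dir y, Finset.mem_image_of_mem dir hy, ?_⟩
            rw [hWofdef, Finset.mem_filter]
            exact ⟨hy, rfl⟩
        have hIRs : Disjoint I Rs := by
          rw [Finset.disjoint_left]
          intro a ha hmem
          exact (Finset.mem_sdiff.mp hmem).2 (Finset.mem_inter.mp ha).2
        obtain ⟨S, hS1, hS2⟩ := leafFold td hT I
          (fun y hy => (Finset.mem_inter.mp hy).2)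
          Rs (RegSide.castW td hbiRs S₀) hIRs
        have hWeq : I ∪ Rs = W := by
          ext y
          rw [Finset.mem_union, hIdef, hRsdef, Finset.mem_inter, Finset.mem_sdiff]
          constructor
          · rintro (⟨h, -⟩ | ⟨h, -⟩) <;> exact h
          · intro hyW
            by_cases hy : y ∈ bagF td c
            · exact Or.inl ⟨hyW, hy⟩
            · exact Or.inr ⟨hyW, hy⟩
        refine ⟨RegSide.castW td hWeq S, ?_⟩
        rw [RegSide.castW_Bf]
        by_cases hI : I.Nonempty
        · exact hS1 hI
        · rw [Finset.not_nonempty_iff_eq_empty] at hI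
          rw [hS2 hI, RegSide.castW_Bf]
          refine hS₀root ?_
          -- dirs has at least two elements
          rcases Finset.eq_empty_or_nonempty dirs with he | _
          · exact absurd he hdirsne.ne_empty
          have hcard1 : dirs.card ≠ 1 := by
            intro h1
            obtain ⟨d₀, hd₀⟩ := Finset.card_eq_one.mp h1
            exact hcaseB ⟨hI, d₀, hd₀⟩
          have : 1 ≤ dirs.card := Finset.card_pos.mpr hdirsne
          omega

end BuildSec6


/-! ### STATEMENT 10: treewidth t-1 implies NLC-width at most 4^t -/

theorem nlcWidth_of_treewidth (t : ℕ) (ht : 1 ≤ t)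
    (X : Type) [PartialOrder X] [Fintype X] [Nonempty X]
    (htw : treewidthLE (coverGraphOf ((· ≤ ·) : X → X → Prop)) (t - 1)) :
    nlcWidthLE X (4 ^ t) := by
  classical
  obtain ⟨ν, td, hbag⟩ := htw
  have hT : td.tree.IsTree := td.isTree
  have hne : (Finset.univ : Finset X).Nonempty := Finset.univ_nonempty
  obtain ⟨P, -⟩ := buildPiece td hT (Fintype.card X)
    (td.tree.dist (node0 td hne.choose) (node0 td hne.choose))
    Finset.univ (node0 td hne.choose) Set.univ hne
    (le_of_eq (Finset.card_univ)) le_rfl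
    (fun x _ => Or.inr (fun β _ => Set.mem_univ β)) (Or.inl rfl)
  have G : GoodTree X t :=
    { tb := P.tb
      posf := P.posf
      pos_spec := fun x => P.pos_spec x (Finset.mem_univ x)
      leaves_eq := P.leaves_eq
      Bf := P.Bf
      Bcard := by
        intro p
        obtain ⟨β, hβ⟩ := P.Bbag p
        rw [hβ]
        have h1 : (bagF td β).card = (td.bag β).ncard := by
          rw [bagF, Set.ncard_eq_toFinset_card']
        rw [h1]
        have := hbag β
        omega
      step := by
        intro u b hpos z hz x hx
        refine P.step u b hpos z hz x ?_
        rcases hx with h | h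
        · exact Or.inl ⟨Finset.mem_univ x, h⟩
        · exact Or.inr h
      split := fun u x y hpx hpy =>
        P.split u x y (Finset.mem_univ x) (Finset.mem_univ y) hpx hpy }
  exact G.nlcWidth
end
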